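/- arXiv:2005.14125 — 2 statements merged into one kernel-verified Lean document; each statement's English description precedes it below -/
import Mathlib

section
/- Let d ≥ 2. There exist continuous functions φ_{pq} : [0,1] → ℝ, p = 1, ..., d, q = 1, ..., 2d+1, with the following two properties: (a) every continuous function f : [0,1]^d → ℝ can be represented as f(x_1, ..., x_d) = ∑_{q=1}^{2d+1} g_q(∑_{p=1}^d φ_{pq}(x_p)) with continuous functions g_q : ℝ → ℝ depending on f; and (b) every function f : [0,1]^d → ℝ, without any regularity assumption, can be represented as f(x_1, ..., x_d) = ∑_{q=1}^{2d+1} g_q(∑_{p=1}^d φ_{pq}(x_p)) with (generally discontinuous) functions g_q : ℝ → ℝ depending on f. -/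
namespace KST
noncomputable section
open Set Finset


/-! ### Basic ramp and clamp -/

def ramp (x : ℝ) : ℝ := max 0 (min 1 x)

lemma ramp_of_nonpos {x : ℝ} (h : x ≤ 0) : ramp x = 0 := by
  simp only [ramp]
  rw [max_eq_left]
  exact le_trans (min_le_right _ _) h

lemma ramp_of_one_le {x : ℝ} (h : 1 ≤ x) : ramp x = 1 := by
  simp only [ramp, min_eq_left h]
  rw [max_eq_right]; norm_num

lemma ramp_nonneg (x : ℝ) : 0 ≤ ramp x := le_max_left _ _

lemma ramp_le_one (x : ℝ) : ramp x ≤ 1 := by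
  simp only [ramp]
  exact max_le (by norm_num) (min_le_left _ _)

lemma continuous_ramp : Continuous ramp :=
  continuous_const.max (continuous_const.min continuous_id)

def clamp (t : ℝ) : ℝ := max 0 (min 1 t)

lemma clamp_mem_Icc (t : ℝ) : clamp t ∈ Icc (0:ℝ) 1 :=
  ⟨le_max_left _ _, max_le (by norm_num) (min_le_left _ _)⟩

lemma clamp_of_mem {t : ℝ} (h : t ∈ Icc (0:ℝ) 1) : clamp t = t := by
  simp only [clamp, min_eq_right h.2, max_eq_right h.1]

lemma continuous_clamp : Continuous clamp :=
  continuous_const.max (continuous_const.min continuous_id)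

lemma clamp_near {t s : ℝ} (h : t ∈ Set.Icc (0:ℝ) 1) : |t - clamp s| ≤ |t - s| := by
  obtain ⟨h0, h1⟩ := h
  unfold clamp
  rcases le_or_gt s 0 with hs | hs
  · rw [min_eq_right (le_trans hs (by norm_num)), max_eq_left hs, sub_zero]
    rw [abs_of_nonneg h0, abs_of_nonneg (by linarith)]
    linarith
  · rcases le_or_gt s 1 with hs1 | hs1
    · rw [min_eq_right hs1, max_eq_right hs.le]
    · rw [min_eq_left hs1.le, max_eq_right (by norm_num)]
      rw [abs_of_nonpos (by linarith), abs_of_nonpos (by linarith)]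
      linarith

/-! ### Floor approximation -/

lemma floor_approx {ν : ℝ} (hν : 0 < ν) (x : ℝ) : |ν * (⌊x / ν⌋ : ℝ) - x| ≤ ν := by
  have h1 : (⌊x / ν⌋ : ℝ) ≤ x / ν := Int.floor_le _
  have h2 : x / ν ≤ (⌊x / ν⌋ : ℝ) + 1 := le_of_lt (Int.lt_floor_add_one _)
  rw [abs_le]
  constructor
  · have : ν * (x / ν - 1) ≤ ν * (⌊x / ν⌋ : ℝ) := by
      apply mul_le_mul_of_nonneg_left _ hν.le
      linarith
    have hx : ν * (x / ν) = x := by field_simp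
    nlinarith [this]
  · have : ν * (⌊x / ν⌋ : ℝ) ≤ ν * (x / ν) := mul_le_mul_of_nonneg_left h1 hν.le
    have hx : ν * (x / ν) = x := by field_simp
    nlinarith [this]

/-! ### Base-B digit sums -/

lemma digitsum_inj : ∀ (n B : ℕ) (a b : Fin n → ℕ), (∀ p, a p < B) → (∀ p, b p < B) →
    (∑ p, a p * B ^ (p : ℕ)) = (∑ p, b p * B ^ (p : ℕ)) → a = b := by
  intro n
  induction n with
  | zero => intro B a b _ _ _; funext p; exact absurd p.2 (by omega)
  | succ n ih =>
    intro B a b ha hb hsum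
    have hB : 0 < B := Nat.pos_of_ne_zero (by rintro rfl; exact absurd (ha 0) (by omega))
    have expand : ∀ (c : Fin (n+1) → ℕ),
        (∑ p, c p * B ^ (p : ℕ)) = c 0 + B * ∑ p : Fin n, c p.succ * B ^ (p : ℕ) := by
      intro c
      rw [Fin.sum_univ_succ]
      congr 1
      · simp
      · rw [Finset.mul_sum]
        apply Finset.sum_congr rfl
        intro p _
        simp [Fin.val_succ, pow_succ]
        ring
    rw [expand a, expand b] at hsum
    have h0 : a 0 = b 0 := by
      have h1 : (a 0 + B * ∑ p : Fin n, a p.succ * B ^ (p:ℕ)) % B = a 0 % B := by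
        simp [Nat.add_mul_mod_self_left]
      have h2 : (b 0 + B * ∑ p : Fin n, b p.succ * B ^ (p:ℕ)) % B = b 0 % B := by
        simp [Nat.add_mul_mod_self_left]
      have := congrArg (· % B) hsum
      rw [h1, h2] at this
      rwa [Nat.mod_eq_of_lt (ha 0), Nat.mod_eq_of_lt (hb 0)] at this
    have htail : (∑ p : Fin n, a p.succ * B ^ (p:ℕ)) = ∑ p : Fin n, b p.succ * B ^ (p:ℕ) := by
      have := hsum
      rw [h0] at this
      have := Nat.add_left_cancel this
      exact Nat.eq_of_mul_eq_mul_left hB this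
    have := ih B (fun p => a p.succ) (fun p => b p.succ) (fun p => ha p.succ) (fun p => hb p.succ) htail
    funext p
    refine Fin.cases ?_ ?_ p
    · exact h0
    · intro j; exact congrFun this j


def mm (d : ℕ) : ℕ := 2*d+1
def MR (d : ℕ) : ℝ := 2*(d:ℝ)+3

lemma MR_pos (d : ℕ) : 0 < MR d := by unfold MR; positivity
lemma MR_ge3 (d : ℕ) : 3 ≤ MR d := by unfold MR; have : (0:ℝ) ≤ d := Nat.cast_nonneg d; linarith
lemma mm_cast (d : ℕ) : ((mm d : ℕ) : ℝ) = MR d - 2 := by unfold mm MR; push_cast; ring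

def sh (d : ℕ) (q : Fin (mm d)) : ℝ := (((q:ℕ):ℝ) + 1) / MR d

lemma sh_lb (d : ℕ) (q : Fin (mm d)) : 1 / MR d ≤ sh d q := by
  unfold sh
  gcongr
  · exact (MR_pos d).le
  · have : (0:ℝ) ≤ ((q:ℕ):ℝ) := Nat.cast_nonneg _
    linarith

lemma sh_ub (d : ℕ) (q : Fin (mm d)) : sh d q ≤ 1 - 2 / MR d := by
  unfold sh
  have hq : ((q:ℕ):ℝ) ≤ ((mm d : ℕ):ℝ) - 1 := by
    have h2 : (q:ℕ) + 1 ≤ mm d := q.2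
    have := Nat.cast_le (α := ℝ) |>.mpr h2
    push_cast at this ⊢
    linarith
  rw [mm_cast] at hq
  rw [div_le_iff₀ (MR_pos d)]
  have h3 := MR_ge3 d
  have hM : (1 - 2 / MR d) * MR d = MR d - 2 := by field_simp
  linarith [hM]

lemma sh_pos (d : ℕ) (q : Fin (mm d)) : 0 < sh d q :=
  lt_of_lt_of_le (div_pos one_pos (MR_pos d)) (sh_lb d q)

lemma sh_lt_one (d : ℕ) (q : Fin (mm d)) : sh d q < 1 := by
  have := sh_ub d q
  have h2 : 0 < 2 / MR d := div_pos two_pos (MR_pos d)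
  linarith

/-- center of the `i`-th gap of the `q`-grid at scale `1/N`. -/
def χ (d N : ℕ) (q : Fin (mm d)) (i : ℕ) : ℝ := ((i:ℝ) - 1 + sh d q) / N

def γ (d N : ℕ) : ℝ := 1 / (N * (4 * MR d))

lemma gamma_pos (d : ℕ) {N : ℕ} (hN : 1 ≤ N) : 0 < γ d N := by
  unfold γ
  have : (0:ℝ) < N := by exact_mod_cast hN
  have := MR_pos d
  positivity

lemma chi_succ (d : ℕ) {N : ℕ} (q : Fin (mm d)) (i : ℕ) (hN : 1 ≤ N) :
    χ d N q (i+1) = χ d N q i + 1 / N := by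
  unfold χ
  have : (0:ℝ) < N := by exact_mod_cast hN
  field_simp
  push_cast; ring

lemma chi_le_chi (d : ℕ) {N : ℕ} (hN : 1 ≤ N) (q : Fin (mm d)) {i j : ℕ} (h : i ≤ j) :
    χ d N q i ≤ χ d N q j := by
  unfold χ
  have hNp : (0:ℝ) < N := by exact_mod_cast hN
  have : (i:ℝ) ≤ (j:ℝ) := by exact_mod_cast h
  gcongr

lemma gamma_le (d : ℕ) {N : ℕ} (hN : 1 ≤ N) : 2 * γ d N ≤ 1 / (2 * N) := by
  unfold γ
  have hNp : (0:ℝ) < N := by exact_mod_cast hN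
  have h3 := MR_ge3 d
  rw [show (2:ℝ) * (1/(↑N*(4*MR d))) = 1/(↑N*(2*MR d)) by field_simp; ring]
  apply one_div_le_one_div_of_le (by positivity)
  nlinarith

def cellSet (d N : ℕ) (q : Fin (mm d)) (i : ℕ) : Set ℝ :=
  Icc (χ d N q i + γ d N) (χ d N q (i+1) - γ d N)

def gapSet (d N : ℕ) (q : Fin (mm d)) (i : ℕ) : Set ℝ :=
  Ioo (χ d N q i - γ d N) (χ d N q i + γ d N)

/-- a point lies in gaps of at most one grid `q` (at a common scale) -/
lemma gap_disjoint (d : ℕ) {N : ℕ} (hN : 1 ≤ N) {q q' : Fin (mm d)} {i i' : ℕ} {t : ℝ}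
    (h : t ∈ gapSet d N q i) (h' : t ∈ gapSet d N q' i') : q = q' := by
  by_contra hqq
  have hNp : (0:ℝ) < N := by exact_mod_cast hN
  have hMR := MR_pos d
  have hg : |χ d N q i - χ d N q' i'| < 2 * γ d N := by
    simp only [gapSet, Set.mem_Ioo] at h h'
    rw [abs_lt]; constructor <;> nlinarith [h.1, h.2, h'.1, h'.2]
  set a : ℤ := (i : ℤ) - (i' : ℤ) with ha
  set D : ℤ := ((q:ℕ) : ℤ) - ((q':ℕ) : ℤ) with hD
  have hDne : D ≠ 0 := by
    simp only [hD, sub_ne_zero]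
    intro hc
    exact hqq (Fin.ext (by exact_mod_cast hc))
  have hM0 : (0:ℤ) ≤ (mm d : ℤ) + 2 := by positivity
  have hDabs : |D| < (mm d : ℤ) + 2 := by
    rw [abs_lt]
    have h1 := q.2
    have h2 := q'.2
    omega
  have hkey : a * ((mm d : ℤ) + 2) + D ≠ 0 := by
    intro hc
    rcases eq_or_ne a 0 with h0 | h0
    · rw [h0] at hc; simp at hc; exact hDne hc
    · have hda : D = -(a * ((mm d:ℤ)+2)) := by linarith
      have habs : |D| = |a| * ((mm d:ℤ)+2) := by
        rw [hda, abs_neg, abs_mul, abs_of_nonneg hM0]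
      have h1 : 1 ≤ |a| := Int.one_le_abs h0
      nlinarith [habs, hDabs]
  set A : ℝ := ((i:ℝ) - (i':ℝ)) * MR d + (((q:ℕ):ℝ) - ((q':ℕ):ℝ)) with hA
  have hone : (1:ℝ) ≤ |A| := by
    have hcast : ((a * ((mm d:ℤ)+2) + D : ℤ) : ℝ) = A := by
      rw [hA, ha, hD]
      push_cast
      rw [mm_cast]
      ring
    rw [← hcast, ← Int.cast_abs]
    have : (1:ℤ) ≤ |a * ((mm d:ℤ)+2) + D| := Int.one_le_abs hkey
    exact_mod_cast this
  have hNM : (0:ℝ) < ↑N * MR d := mul_pos hNp hMR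
  have hval : χ d N q i - χ d N q' i' = A / (N * MR d) := by
    unfold χ sh
    rw [eq_div_iff (ne_of_gt hNM), hA]
    field_simp
    ring
  rw [hval] at hg
  rw [abs_div, abs_of_pos hNM] at hg
  unfold γ at hg
  rw [div_lt_iff₀ hNM] at hg
  have heq : 2 * (1 / (↑N * (4 * MR d))) * (↑N * MR d) = 1/2 := by
    field_simp
    ring
  rw [heq] at hg
  linarith

/-- covering : every point of `[0,1]` is in a cell or a gap (with index bounds) -/
lemma cover (d : ℕ) {N : ℕ} (hN : 1 ≤ N) (q : Fin (mm d)) {t : ℝ} (ht : t ∈ Icc (0:ℝ) 1) :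
    ∃ i : ℕ, i ≤ N + 1 ∧ (t ∈ cellSet d N q i ∨ (1 ≤ i ∧ t ∈ gapSet d N q i)) := by
  have hNp : (0:ℝ) < N := by exact_mod_cast hN
  have hMR := MR_pos d
  have hγ := gamma_pos d hN
  set r : ℝ := t * N + 1 - sh d q with hr
  have hr0 : 0 < r := by
    have := sh_lt_one d q
    have ht0 := ht.1
    nlinarith
  have hrN : r < N + 1 := by
    have := sh_pos d q
    have ht1 := ht.2
    nlinarith
  set iz : ℤ := ⌊r⌋ with hiz
  have hiz0 : 0 ≤ iz := Int.floor_nonneg.mpr hr0.le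
  have hizN : iz ≤ N := by
    have : iz < (N:ℤ) + 1 := by
      rw [hiz]
      apply Int.floor_lt.mpr
      push_cast
      exact hrN
    omega
  set i : ℕ := iz.toNat with hi
  have hcast : (i : ℝ) = (iz : ℝ) := by
    rw [hi]
    exact_mod_cast Int.toNat_of_nonneg hiz0
  have hiN : i ≤ N := by omega
  have hfl : (iz:ℝ) ≤ r := Int.floor_le r
  have hfr : r < (iz:ℝ) + 1 := Int.lt_floor_add_one r
  have h1 : χ d N q i ≤ t := by
    unfold χ
    rw [div_le_iff₀ hNp, hcast]
    nlinarith
  have h2 : t ≤ χ d N q (i+1) := by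
    unfold χ
    rw [le_div_iff₀ hNp]
    push_cast [hcast]
    nlinarith
  by_cases hc1 : t < χ d N q i + γ d N
  · have hi1 : 1 ≤ i := by
      by_contra h0
      have hie : i = 0 := by omega
      rw [hie] at hc1
      have hx : χ d N q 0 + γ d N < 0 := by
        have hsh := sh_ub d q
        have h2M : 0 < 2 / MR d := div_pos two_pos hMR
        have hch : χ d N q 0 = (-1 + sh d q)/N := by unfold χ; norm_num
        have hb1 : χ d N q 0 ≤ (-(2/MR d))/N := by
          rw [hch]
          gcongr
          linarith
        have hb2 : (-(2/MR d))/N + γ d N < 0 := by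
          have heq : (-(2/MR d))/N + γ d N = -7/(↑N*(4*MR d)) := by
            unfold γ
            field_simp
            ring
          rw [heq]
          apply div_neg_of_neg_of_pos (by norm_num) (mul_pos hNp (by linarith [MR_pos d]))
        linarith
      have := ht.1
      linarith
    exact ⟨i, by omega, Or.inr ⟨hi1, ⟨by linarith, hc1⟩⟩⟩
  · by_cases hc2 : χ d N q (i+1) - γ d N < t
    · refine ⟨i+1, by omega, Or.inr ⟨by omega, ⟨hc2, by linarith⟩⟩⟩
    · push_neg at hc1 hc2
      exact ⟨i, by omega, Or.inl ⟨hc1, hc2⟩⟩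

/-- sample point: center of cell `i` -/
def ς (d N : ℕ) (q : Fin (mm d)) (i : ℕ) : ℝ := χ d N q i + 1 / (2 * N)

lemma cell_near_sample (d : ℕ) {N : ℕ} (hN : 1 ≤ N) (q : Fin (mm d)) {i : ℕ} {t : ℝ}
    (h : t ∈ cellSet d N q i) : |t - ς d N q i| ≤ 1 / N := by
  have hNp : (0:ℝ) < N := by exact_mod_cast hN
  have hγ := gamma_pos d hN
  have hhalf : 2 * (1/(2*(N:ℝ))) = 1/N := by field_simp
  obtain ⟨hl, hr⟩ := h
  rw [chi_succ d q i hN] at hr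
  unfold ς
  rw [abs_le]
  constructor <;> nlinarith

lemma gap_near_sample (d : ℕ) {N : ℕ} (hN : 1 ≤ N) (q : Fin (mm d)) {i : ℕ} (hi : 1 ≤ i) {t : ℝ}
    (h : t ∈ gapSet d N q i) : |t - ς d N q (i-1)| ≤ 2 / N ∧ |t - ς d N q i| ≤ 2 / N := by
  have hNp : (0:ℝ) < N := by exact_mod_cast hN
  have hγ2 := gamma_le d hN
  have hγ := gamma_pos d hN
  obtain ⟨hl, hr⟩ := h
  have hhalf : 2 * (1/(2*(N:ℝ))) = 1/N := by field_simp
  have hNinv : 0 < 1/(N:ℝ) := by positivity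
  have h2N : 2/(N:ℝ) = 2*(1/N) := by ring
  have hsucc : χ d N q i = χ d N q (i-1) + 1/N := by
    have := chi_succ d q (i-1) hN
    have hieq : i - 1 + 1 = i := by omega
    rw [hieq] at this
    linarith
  constructor
  · unfold ς
    rw [abs_le]
    constructor <;> nlinarith
  · unfold ς
    rw [abs_le]
    constructor <;> nlinarith

lemma sample_mem (d : ℕ) {N : ℕ} (hN : 2 ≤ N) (q : Fin (mm d)) {i : ℕ} (hi : i ≤ N + 1) :
    ς d N q i ∈ Icc (-1 : ℝ) 2 := by
  have hNp : (0:ℝ) < N := by exact_mod_cast (by omega : 1 ≤ N)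
  have hN2 : (2:ℝ) ≤ N := by exact_mod_cast hN
  have hs0 := sh_pos d q
  have hs1 := sh_lt_one d q
  have hiR : (i:ℝ) ≤ (N:ℝ) + 1 := by exact_mod_cast hi
  unfold ς χ
  constructor
  · have h1 : (0:ℝ) - 1 + sh d q ≥ -1 := by linarith
    have : ((i:ℝ) - 1 + sh d q) / N ≥ (-1) / N := by
      gcongr
      have : (0:ℝ) ≤ (i:ℝ) := Nat.cast_nonneg i
      linarith
    have h2 : (-1:ℝ)/N ≥ -1 := by
      rw [ge_iff_le, neg_le, ← neg_div]
      rw [div_le_iff₀ hNp]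
      nlinarith
    have h3 : 0 < 1/(2*(N:ℝ)) := by positivity
    linarith
  · have : ((i:ℝ) - 1 + sh d q) / N ≤ ((N:ℝ) + 1) / N := by
      gcongr
      linarith
    have h2 : ((N:ℝ)+1)/N ≤ 1.5 := by
      rw [div_le_iff₀ hNp]
      nlinarith
    have h3 : 1/(2*(N:ℝ)) ≤ 0.25 := by
      rw [div_le_iff₀ (by positivity)]
      nlinarith
    linarith

/-- a cell has diameter `< 1/N` -/
lemma cell_diam (d : ℕ) {N : ℕ} (hN : 1 ≤ N) (q : Fin (mm d)) {i : ℕ} {t t' : ℝ}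
    (h : t ∈ cellSet d N q i) (h' : t' ∈ cellSet d N q i) : |t - t'| ≤ 1 / N := by
  have h1 := cell_near_sample d hN q h
  have h2 := cell_near_sample d hN q h'
  have hNp : (0:ℝ) < N := by exact_mod_cast hN
  have hγ := gamma_pos d hN
  obtain ⟨hl, hr⟩ := h
  obtain ⟨hl', hr'⟩ := h'
  rw [chi_succ d q i hN] at hr hr'
  rw [abs_le]
  constructor <;> nlinarith




def interp (d N : ℕ) (q : Fin (mm d)) (cv : ℕ → ℝ) (t : ℝ) : ℝ :=
  cv 0 + ∑ i' ∈ Finset.range (N+1),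
    (cv (i'+1) - cv i') * ramp ((t - (χ d N q (i'+1) - γ d N)) / (2 * γ d N))

lemma interp_continuous (d N : ℕ) (q : Fin (mm d)) (cv : ℕ → ℝ) :
    Continuous (interp d N q cv) := by
  unfold interp
  apply continuous_const.add
  apply continuous_finset_sum
  intro i _
  exact continuous_const.mul (continuous_ramp.comp ((continuous_id.sub continuous_const).div_const _))

lemma interp_cell (d : ℕ) {N : ℕ} (hN : 1 ≤ N) (q : Fin (mm d)) (cv : ℕ → ℝ) {i : ℕ} {t : ℝ}
    (hi : i ≤ N+1) (ht : t ∈ cellSet d N q i) : interp d N q cv t = cv i := by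
  have hγ := gamma_pos d hN
  obtain ⟨hl, hr⟩ := ht
  unfold interp
  have hsub : Finset.range i ⊆ Finset.range (N+1) := Finset.range_subset_range.mpr (by omega)
  rw [← Finset.sum_subset hsub ?_]
  · have hone : ∀ i' ∈ Finset.range i,
        (cv (i'+1) - cv i') * ramp ((t - (χ d N q (i'+1) - γ d N)) / (2 * γ d N))
        = cv (i'+1) - cv i' := by
      intro i' hi'
      rw [Finset.mem_range] at hi'
      have h1 : χ d N q (i'+1) ≤ χ d N q i := chi_le_chi d hN q (by omega)
      have harg : 1 ≤ (t - (χ d N q (i'+1) - γ d N)) / (2 * γ d N) := by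
        rw [le_div_iff₀ (by linarith)]
        linarith
      rw [ramp_of_one_le harg, mul_one]
    rw [Finset.sum_congr rfl hone, Finset.sum_range_sub]
    ring
  · intro i' hi1 hi2
    rw [Finset.mem_range] at hi1
    rw [Finset.mem_range, not_lt] at hi2
    have h1 : χ d N q (i+1) ≤ χ d N q (i'+1) := chi_le_chi d hN q (by omega)
    have harg : (t - (χ d N q (i'+1) - γ d N)) / (2 * γ d N) ≤ 0 := by
      apply div_nonpos_of_nonpos_of_nonneg _ (by linarith)
      linarith
    rw [ramp_of_nonpos harg, mul_zero]

lemma interp_gap (d : ℕ) {N : ℕ} (hN : 1 ≤ N) (q : Fin (mm d)) (cv : ℕ → ℝ) {i : ℕ} {t : ℝ}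
    (hi1 : 1 ≤ i) (hi : i ≤ N+1) (ht : t ∈ gapSet d N q i) :
    ∃ s, 0 ≤ s ∧ s ≤ 1 ∧ interp d N q cv t = (1-s) * cv (i-1) + s * cv i := by
  have hγ := gamma_pos d hN
  have hγ2 := gamma_le d hN
  have hNinv : (0:ℝ) < 1/N := by
    have : (0:ℝ) < N := by exact_mod_cast hN
    positivity
  have hhalf : 2 * (1/(2*(N:ℝ))) = 1/N := by
    have : (0:ℝ) < N := by exact_mod_cast hN
    field_simp
  obtain ⟨hl, hr⟩ := ht
  refine ⟨ramp ((t - (χ d N q i - γ d N)) / (2 * γ d N)), ramp_nonneg _, ramp_le_one _, ?_⟩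
  unfold interp
  have hsub : Finset.range i ⊆ Finset.range (N+1) := Finset.range_subset_range.mpr (by omega)
  rw [← Finset.sum_subset hsub ?_]
  · have hieq : i = (i-1) + 1 := by omega
    have hsplit : Finset.range i = Finset.range ((i-1)+1) := by rw [← hieq]
    rw [hsplit, Finset.sum_range_succ]
    have hone : ∀ i' ∈ Finset.range (i-1),
        (cv (i'+1) - cv i') * ramp ((t - (χ d N q (i'+1) - γ d N)) / (2 * γ d N))
        = cv (i'+1) - cv i' := by
      intro i' hi'
      rw [Finset.mem_range] at hi'
      have h0 : χ d N q (i'+1) + 1/N ≤ χ d N q i := by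
        rw [← chi_succ d q (i'+1) hN]
        exact chi_le_chi d hN q (by omega)
      have harg : 1 ≤ (t - (χ d N q (i'+1) - γ d N)) / (2 * γ d N) := by
        rw [le_div_iff₀ (by linarith)]
        nlinarith
      rw [ramp_of_one_le harg, mul_one]
    rw [Finset.sum_congr rfl hone, Finset.sum_range_sub]
    have h1 : (i - 1) + 1 = i := by omega
    rw [h1]
    ring
  · intro i' hi1' hi2
    rw [Finset.mem_range] at hi1'
    rw [Finset.mem_range, not_lt] at hi2
    have h1 : χ d N q i + 1/N ≤ χ d N q (i'+1) := by
      rw [← chi_succ d q i hN]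
      exact chi_le_chi d hN q (by omega)
    have harg : (t - (χ d N q (i'+1) - γ d N)) / (2 * γ d N) ≤ 0 := by
      apply div_nonpos_of_nonpos_of_nonneg _ (by linarith)
      nlinarith
    rw [ramp_of_nonpos harg, mul_zero]




/-- the plateau values of the next-stage function -/
def cval (d N : ℕ) (e : ℝ) (prev : Fin d → Fin (mm d) → ℝ → ℝ)
    (q : Fin (mm d)) (p : Fin d) (i : ℕ) : ℝ :=
  (e/4) * ((⌊prev p q (ς d N q i) / (e/4)⌋ : ℤ) : ℝ)
    + (e/(4*((N:ℝ)+4)^(d+1))) * (((i+1) * (N+4)^(p:ℕ) : ℕ) : ℝ)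

lemma cval_close (d : ℕ) {N : ℕ} (hN : 1 ≤ N) {e : ℝ} (he : 0 < e)
    (prev : Fin d → Fin (mm d) → ℝ → ℝ) (q : Fin (mm d)) (p : Fin d) {i : ℕ} (hi : i ≤ N+1) :
    |cval d N e prev q p i - prev p q (ς d N q i)| ≤ e/2 := by
  have hBr : (1:ℝ) ≤ (N:ℝ)+4 := by
    have : (0:ℝ) ≤ N := Nat.cast_nonneg N
    linarith
  have h1 : |(e/4) * ((⌊prev p q (ς d N q i) / (e/4)⌋ : ℤ) : ℝ) - prev p q (ς d N q i)| ≤ e/4 :=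
    floor_approx (by positivity) _
  have hcast : (((i+1) * (N+4)^(p:ℕ) : ℕ) : ℝ) ≤ ((N:ℝ)+4)^(d : ℕ) := by
    have hnat : (i+1) * (N+4)^(p:ℕ) ≤ (N+4)^(d:ℕ) := by
      have hp : (p:ℕ) ≤ d - 1 := by have := p.2; omega
      have h2 : (i+1) ≤ N+4 := by omega
      have h3 : (N+4)^(p:ℕ) ≤ (N+4)^(d-1) := Nat.pow_le_pow_right (by omega) hp
      calc (i+1) * (N+4)^(p:ℕ) ≤ (N+4) * (N+4)^(d-1) := Nat.mul_le_mul h2 h3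
        _ = (N+4)^(d-1+1) := by rw [pow_succ]; ring
        _ = (N+4)^(d:ℕ) := by congr 1; have := p.2; omega
    calc (((i+1) * (N+4)^(p:ℕ) : ℕ) : ℝ) ≤ (((N+4)^(d:ℕ) : ℕ) : ℝ) := by exact_mod_cast hnat
      _ = ((N:ℝ)+4)^(d:ℕ) := by push_cast; ring
  have h2 : (e/(4*((N:ℝ)+4)^(d+1))) * (((i+1) * (N+4)^(p:ℕ) : ℕ) : ℝ) ≤ e/4 := by
    have hpow : (0:ℝ) < ((N:ℝ)+4)^(d+1) := by positivity
    have hnn : (0:ℝ) ≤ (((i+1) * (N+4)^(p:ℕ) : ℕ) : ℝ) := Nat.cast_nonneg _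
    calc (e/(4*((N:ℝ)+4)^(d+1))) * (((i+1) * (N+4)^(p:ℕ) : ℕ) : ℝ)
        ≤ (e/(4*((N:ℝ)+4)^(d+1))) * ((N:ℝ)+4)^(d:ℕ) := by
          apply mul_le_mul_of_nonneg_left hcast (by positivity)
      _ = e/(4*((N:ℝ)+4)) := by
          rw [pow_succ]
          field_simp
      _ ≤ e/4 := by
          apply div_le_div_of_nonneg_left he.le (by norm_num)
          linarith
  have h2' : (0:ℝ) ≤ (e/(4*((N:ℝ)+4)^(d+1))) * (((i+1) * (N+4)^(p:ℕ) : ℕ) : ℝ) := by positivity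
  unfold cval
  calc |(e/4) * ((⌊prev p q (ς d N q i) / (e/4)⌋ : ℤ) : ℝ)
        + (e/(4*((N:ℝ)+4)^(d+1))) * (((i+1) * (N+4)^(p:ℕ) : ℕ) : ℝ) - prev p q (ς d N q i)|
      ≤ |(e/4) * ((⌊prev p q (ς d N q i) / (e/4)⌋ : ℤ) : ℝ) - prev p q (ς d N q i)|
        + |(e/(4*((N:ℝ)+4)^(d+1))) * (((i+1) * (N+4)^(p:ℕ) : ℕ) : ℝ)| := by
        have : |((e/4) * ((⌊prev p q (ς d N q i) / (e/4)⌋ : ℤ) : ℝ) - prev p q (ς d N q i)) + ((e/(4*((N:ℝ)+4)^(d+1))) * (((i+1) * (N+4)^(p:ℕ) : ℕ) : ℝ))| ≤ |(e/4) * ((⌊prev p q (ς d N q i) / (e/4)⌋ : ℤ) : ℝ) - prev p q (ς d N q i)| + |(e/(4*((N:ℝ)+4)^(d+1))) * (((i+1) * (N+4)^(p:ℕ) : ℕ) : ℝ)| :=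
          abs_add_le _ _
        convert this using 2
        ring
    _ ≤ e/4 + e/4 := by
        apply add_le_add h1
        rw [abs_of_nonneg h2']
        exact h2
    _ = e/2 := by ring

lemma cval_margin (d : ℕ) (hd : 1 ≤ d) {N : ℕ} (hN : 4*d+4 ≤ N) {e : ℝ} (he : 0 < e)
    (prev : Fin d → Fin (mm d) → ℝ → ℝ) (q : Fin (mm d)) (J J' : Fin d → ℕ)
    (hJ : ∀ p, J p ≤ N+1) (hJ' : ∀ p, J' p ≤ N+1) (hne : J ≠ J') :
    e/(4*((N:ℝ)+4)^(d+1)) ≤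
      |(∑ p, cval d N e prev q p (J p)) - ∑ p, cval d N e prev q p (J' p)| := by
  set Br : ℝ := (N:ℝ)+4 with hBr
  have hBr1 : (1:ℝ) ≤ Br := by
    have : (0:ℝ) ≤ N := Nat.cast_nonneg N
    rw [hBr]; linarith
  have hBrpos : (0:ℝ) < Br := by linarith
  set ν : ℝ := e/4 with hν
  set ηv : ℝ := e/(4*Br^(d+1)) with hηv
  have hνpos : 0 < ν := by rw [hν]; positivity
  have hηpos : 0 < ηv := by rw [hηv]; positivity
  have hBr5 : (2:ℝ) ≤ Br := by
    have : (0:ℝ) ≤ N := Nat.cast_nonneg N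
    rw [hBr]; linarith
  have hp2 : (2:ℝ) ≤ Br^(d+1) := le_trans hBr5 (le_self_pow₀ (by linarith) (by omega))
  have hην : ηv ≤ ν/2 := by
    rw [hηv, hν]
    rw [div_le_div_iff₀ (by positivity) (by norm_num)]
    nlinarith [he.le]
  set L : (Fin d → ℕ) → ℤ := fun K => ∑ p, ⌊prev p q (ς d N q (K p)) / ν⌋ with hL
  set Sn : (Fin d → ℕ) → ℕ := fun K => ∑ p, (K p + 1) * (N+4)^(p:ℕ) with hSn
  have hsum : ∀ K : Fin d → ℕ, (∑ p, cval d N e prev q p (K p))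
      = ν * ((L K : ℤ) : ℝ) + ηv * ((Sn K : ℕ) : ℝ) := by
    intro K
    unfold cval
    rw [Finset.sum_add_distrib, ← Finset.mul_sum, ← Finset.mul_sum, hL, hSn]
    push_cast
    ring
  rw [hsum J, hsum J']
  have hSne : Sn J ≠ Sn J' := by
    intro hc
    apply hne
    have := digitsum_inj d (N+4) (fun p => J p + 1) (fun p => J' p + 1)
      (fun p => by have := hJ p; show J p + 1 < N+4; omega)
      (fun p => by have := hJ' p; show J' p + 1 < N+4; omega) (by
        rw [hSn] at hc; exact hc)
    funext p
    have := congrFun this p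
    omega
  have hSb : ∀ (K : Fin d → ℕ), (∀ p, K p ≤ N+1) → ((Sn K : ℕ) : ℝ) ≤ (d:ℝ) * Br^(d:ℕ) := by
    intro K hK
    have hnat : Sn K ≤ d * (N+4)^(d:ℕ) := by
      rw [hSn]
      calc (∑ p : Fin d, (K p + 1) * (N+4)^(p:ℕ)) ≤ ∑ _p : Fin d, (N+4)^(d:ℕ) := by
            apply Finset.sum_le_sum
            intro p _
            have hp : (p:ℕ) ≤ d - 1 := by have := p.2; omega
            have h2 : (K p + 1) ≤ N+4 := by have := hK p; omega
            have h3 : (N+4)^(p:ℕ) ≤ (N+4)^(d-1) := Nat.pow_le_pow_right (by omega) hp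
            calc (K p + 1) * (N+4)^(p:ℕ) ≤ (N+4) * (N+4)^(d-1) := Nat.mul_le_mul h2 h3
              _ = (N+4)^(d-1+1) := by rw [pow_succ]; ring
              _ = (N+4)^(d:ℕ) := by congr 1; omega
        _ = d * (N+4)^(d:ℕ) := by
            rw [Finset.sum_const, Finset.card_univ, Fintype.card_fin]
            ring
    calc ((Sn K : ℕ) : ℝ) ≤ ((d * (N+4)^(d:ℕ) : ℕ) : ℝ) := by exact_mod_cast hnat
      _ = (d:ℝ) * Br^(d:ℕ) := by rw [hBr]; push_cast; ring
  have hd4 : 4*(d:ℝ) ≤ Br := by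
    rw [hBr]
    have : (4*d+4 : ℝ) ≤ (N:ℝ) := by exact_mod_cast hN
    push_cast at this ⊢
    linarith
  -- key bound : ηv * |ΔS| ≤ ν/4 when |ΔS| ≤ 2 d Br^d... we need per-case
  have hSabs : ∀ (K : Fin d → ℕ), (∀ p, K p ≤ N+1) → |((Sn K : ℕ) : ℝ)| ≤ (d:ℝ) * Br^(d:ℕ) := by
    intro K hK
    rw [abs_of_nonneg (Nat.cast_nonneg _)]
    exact hSb K hK
  have hηS : ηv * ((d:ℝ) * Br^(d:ℕ)) ≤ ν/4 := by
    rw [hηv, hν]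
    have hpow : (0:ℝ) < Br^(d+1) := by positivity
    have heq : e/(4*Br^(d+1)) * ((d:ℝ) * Br^(d:ℕ)) = e * ((d:ℝ)/Br) / 4 := by
      rw [pow_succ]
      field_simp
    rw [heq]
    have : (d:ℝ)/Br ≤ 1/4 := by
      rw [div_le_div_iff₀ hBrpos (by norm_num)]
      linarith
    have he2 : 0 < e := he
    calc e * ((d:ℝ)/Br) / 4 ≤ e * (1/4) / 4 := by
          apply div_le_div_of_nonneg_right _ (by norm_num)
          apply mul_le_mul_of_nonneg_left this he.le
      _ ≤ e/4/4 := by nlinarith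
  by_cases hLL : L J = L J'
  · -- difference is ηv * (S - S')
    have : ν * ((L J : ℤ) : ℝ) + ηv * ((Sn J : ℕ) : ℝ)
        - (ν * ((L J' : ℤ) : ℝ) + ηv * ((Sn J' : ℕ) : ℝ))
        = ηv * (((Sn J : ℕ) : ℝ) - ((Sn J' : ℕ) : ℝ)) := by
      rw [hLL]; ring
    rw [this, abs_mul, abs_of_pos hηpos]
    have h1 : (1:ℝ) ≤ |((Sn J : ℕ) : ℝ) - ((Sn J' : ℕ) : ℝ)| := by
      have hzz : ((Sn J : ℤ) - (Sn J' : ℤ)) ≠ 0 := by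
        intro hc
        apply hSne
        omega
      have h2 : (1:ℤ) ≤ |(Sn J : ℤ) - (Sn J' : ℤ)| := Int.one_le_abs hzz
      have h4 : ((1:ℤ):ℝ) ≤ ((|(Sn J : ℤ) - (Sn J' : ℤ)| : ℤ) : ℝ) := Int.cast_le.mpr h2
      rw [Int.cast_abs] at h4
      push_cast at h4
      convert h4 using 2
    nlinarith
  · have hLd : (1:ℝ) ≤ |((L J : ℤ) : ℝ) - ((L J' : ℤ) : ℝ)| := by
      have h2 : (1:ℤ) ≤ |L J - L J'| := Int.one_le_abs (by omega)
      have h4 : ((1:ℤ):ℝ) ≤ ((|L J - L J'| : ℤ) : ℝ) := Int.cast_le.mpr h2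
      rw [Int.cast_abs] at h4
      push_cast at h4
      convert h4 using 2
    set X : ℝ := ν * (((L J : ℤ) : ℝ) - ((L J' : ℤ) : ℝ)) with hX
    set Y : ℝ := ηv * (((Sn J : ℕ) : ℝ) - ((Sn J' : ℕ) : ℝ)) with hY
    have hXY : ν * ((L J : ℤ) : ℝ) + ηv * ((Sn J : ℕ) : ℝ)
        - (ν * ((L J' : ℤ) : ℝ) + ηv * ((Sn J' : ℕ) : ℝ)) = X + Y := by
      rw [hX, hY]; ring
    rw [hXY]
    have hXb : ν ≤ |X| := by
      rw [hX, abs_mul, abs_of_pos hνpos]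
      nlinarith
    have hYb : |Y| ≤ ν/2 := by
      rw [hY, abs_mul, abs_of_pos hηpos]
      have h5 : |((Sn J : ℕ) : ℝ) - ((Sn J' : ℕ) : ℝ)| ≤ 2 * ((d:ℝ) * Br^(d:ℕ)) := by
        have := hSabs J hJ
        have := hSabs J' hJ'
        have h6 := abs_sub_abs_le_abs_sub ((Sn J : ℕ) : ℝ) ((Sn J' : ℕ) : ℝ)
        have h7 := abs_sub ((Sn J : ℕ) : ℝ) ((Sn J' : ℕ) : ℝ)
        calc |((Sn J : ℕ) : ℝ) - ((Sn J' : ℕ) : ℝ)| ≤ |((Sn J : ℕ) : ℝ)| + |((Sn J' : ℕ) : ℝ)| :=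
              abs_sub _ _
          _ ≤ (d:ℝ) * Br^(d:ℕ) + (d:ℝ) * Br^(d:ℕ) := by
              apply add_le_add (hSabs J hJ) (hSabs J' hJ')
          _ = 2 * ((d:ℝ) * Br^(d:ℕ)) := by ring
      calc ηv * |((Sn J : ℕ) : ℝ) - ((Sn J' : ℕ) : ℝ)| ≤ ηv * (2 * ((d:ℝ) * Br^(d:ℕ))) := by
            apply mul_le_mul_of_nonneg_left h5 hηpos.le
        _ = 2 * (ηv * ((d:ℝ) * Br^(d:ℕ))) := by ring
        _ ≤ 2 * (ν/4) := by linarith [hηS]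
        _ = ν/2 := by ring
    have habs : |X| - |Y| ≤ |X + Y| := by
      have := abs_add_le (X + Y) (-Y)
      simp only [add_neg_cancel_right, abs_neg] at this
      linarith
    linarith




structure St (d : ℕ) where
  φ : Fin d → Fin (mm d) → ℝ → ℝ
  cont : ∀ p q, Continuous (φ p q)
  ε : ℝ
  εpos : 0 < ε
  N : ℕ
  c : Fin (mm d) → Fin d → ℕ → ℝ
  Nbig : 4*d+4 ≤ N
  plateau : ∀ q p i, i ≤ N+1 → ∀ t ∈ cellSet d N q i, φ p q t = c q p i
  margin : ∀ (q : Fin (mm d)) (J J' : Fin d → ℕ), (∀ p, J p ≤ N+1) → (∀ p, J' p ≤ N+1) →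
    J ≠ J' → ε/(4*((N:ℝ)+4)^(d+1)) ≤ |(∑ p, c q p (J p)) - ∑ p, c q p (J' p)|

/-- the margin quantity of a state -/
def eta {d : ℕ} (S : St d) : ℝ := S.ε/(4*((S.N:ℝ)+4)^(d+1))

lemma eta_pos {d : ℕ} (S : St d) : 0 < eta S := by
  unfold eta
  have h1 : (0:ℝ) ≤ (S.N : ℝ) := Nat.cast_nonneg _
  have := S.εpos
  positivity

lemma step_exists (d : ℕ) (hd : 1 ≤ d) (prev : Fin d → Fin (mm d) → ℝ → ℝ)
    (hcont : ∀ p q, Continuous (prev p q)) (e : ℝ) (he : 0 < e) (j : ℕ) :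
    ∃ S : St d, S.ε = e ∧ j ≤ S.N ∧
      ∀ p q, ∀ t ∈ Icc (0:ℝ) 1, |S.φ p q t - prev p q t| ≤ 2*e := by
  classical
  have key : ∀ pq : Fin d × Fin (mm d), ∃ δ, 0 < δ ∧ ∀ s ∈ Icc (-1:ℝ) 2, ∀ t ∈ Icc (-1:ℝ) 2,
      |s - t| < δ → |prev pq.1 pq.2 s - prev pq.1 pq.2 t| < e := by
    intro pq
    have hc : UniformContinuousOn (prev pq.1 pq.2) (Icc (-1:ℝ) 2) :=
      isCompact_Icc.uniformContinuousOn_of_continuous ((hcont pq.1 pq.2).continuousOn)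
    rw [Metric.uniformContinuousOn_iff] at hc
    obtain ⟨δ, hδ, H⟩ := hc e he
    refine ⟨δ, hδ, fun s hs t ht hst => ?_⟩
    have := H s hs t ht (by rwa [Real.dist_eq])
    rwa [Real.dist_eq] at this
  choose δf hδf using key
  haveI hne : Nonempty (Fin d × Fin (mm d)) := ⟨(⟨0, by omega⟩, ⟨0, by unfold mm; omega⟩)⟩
  set δ₀ := Finset.univ.inf' Finset.univ_nonempty δf with hδ₀
  have hδ₀pos : 0 < δ₀ := by
    rw [hδ₀, Finset.lt_inf'_iff]
    exact fun pq _ => (hδf pq).1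
  have hδ₀le : ∀ pq, δ₀ ≤ δf pq := fun pq => Finset.inf'_le _ (Finset.mem_univ _)
  set N := max (max (4*d+4) j) (⌈(2:ℝ)/δ₀⌉₊ + 1) with hN
  have hNbig : 4*d+4 ≤ N := le_trans (le_max_left _ _) (le_max_left _ _)
  have hjN : j ≤ N := le_trans (le_max_right _ _) (le_max_left _ _)
  have hN1 : 1 ≤ N := by omega
  have hN2 : 2 ≤ N := by omega
  have hNpos : (0:ℝ) < N := by exact_mod_cast hN1
  have h2N : 2/(N:ℝ) < δ₀ := by
    have h1 : (⌈(2:ℝ)/δ₀⌉₊ + 1 : ℕ) ≤ N := le_max_right _ _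
    have h2 : (2:ℝ)/δ₀ ≤ (⌈(2:ℝ)/δ₀⌉₊ : ℝ) := Nat.le_ceil _
    have h3 : ((⌈(2:ℝ)/δ₀⌉₊ : ℝ) + 1) ≤ (N:ℝ) := by exact_mod_cast h1
    have h4 : (2:ℝ)/δ₀ < (N:ℝ) := by linarith
    rw [div_lt_iff₀ hNpos]
    rw [div_lt_iff₀ hδ₀pos] at h4
    linarith [mul_comm δ₀ (N:ℝ)]
  set cv : Fin (mm d) → Fin d → ℕ → ℝ := fun q p i => cval d N e prev q p i with hcv
  refine ⟨⟨fun p q => interp d N q (fun i => cv q p i),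
    fun p q => interp_continuous d N q _,
    e, he, N, cv, hNbig,
    ?_, ?_⟩, rfl, hjN, ?_⟩
  · intro q p i hi t ht
    exact interp_cell d hN1 q _ hi ht
  · intro q J J' hJ hJ' hne'
    exact cval_margin d hd hNbig he prev q J J' hJ hJ' hne'
  · intro p q t ht
    show |interp d N q (fun i => cv q p i) t - prev p q t| ≤ 2*e
    have htm : t ∈ Icc (-1:ℝ) 2 := ⟨by linarith [ht.1], by linarith [ht.2]⟩
    obtain ⟨i, hi, hcase⟩ := cover d hN1 q ht
    rcases hcase with hcell | ⟨hi1, hgap⟩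
    · rw [interp_cell d hN1 q _ hi hcell]
      have h1 := cval_close d hN1 he prev q p hi
      have h2 : |prev p q (ς d N q i) - prev p q t| < e := by
        apply (hδf (p, q)).2 _ (sample_mem d hN2 q hi) _ htm
        have h3 := cell_near_sample d hN1 q hcell
        have h4 : (1:ℝ)/N ≤ 2/N := by
          rw [div_le_div_iff₀ hNpos hNpos]
          nlinarith
        calc |ς d N q i - t| = |t - ς d N q i| := abs_sub_comm _ _
          _ ≤ 1/N := h3
          _ < δ₀ := by linarith
          _ ≤ δf (p, q) := hδ₀le _
      calc |cv q p i - prev p q t|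
          ≤ |cv q p i - prev p q (ς d N q i)| + |prev p q (ς d N q i) - prev p q t| := by
            have : |(cv q p i - prev p q (ς d N q i)) + (prev p q (ς d N q i) - prev p q t)| ≤ |cv q p i - prev p q (ς d N q i)| + |prev p q (ς d N q i) - prev p q t| := abs_add_le _ _
            convert this using 2
            ring
        _ ≤ e/2 + e := by
            apply add_le_add _ h2.le
            exact h1
        _ ≤ 2*e := by linarith
    · obtain ⟨s, hs0, hs1, hval⟩ := interp_gap d hN1 q (fun i => cv q p i) hi1 hi hgap
      rw [hval]
      obtain ⟨hg1, hg2⟩ := gap_near_sample d hN1 q hi1 hgap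
      have hb : ∀ i', i' ≤ N+1 → |t - ς d N q i'| ≤ 2/N → |cv q p i' - prev p q t| ≤ 3*e/2 := by
        intro i' hi' hnear
        have h1 := cval_close d hN1 (i := i') he prev q p hi'
        have h2 : |prev p q (ς d N q i') - prev p q t| < e := by
          apply (hδf (p, q)).2 _ (sample_mem d hN2 q hi') _ htm
          calc |ς d N q i' - t| = |t - ς d N q i'| := abs_sub_comm _ _
            _ ≤ 2/N := hnear
            _ < δ₀ := h2N
            _ ≤ δf (p, q) := hδ₀le _
        calc |cv q p i' - prev p q t|
            ≤ |cv q p i' - prev p q (ς d N q i')| + |prev p q (ς d N q i') - prev p q t| := by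
              have : |(cv q p i' - prev p q (ς d N q i')) + (prev p q (ς d N q i') - prev p q t)| ≤ |cv q p i' - prev p q (ς d N q i')| + |prev p q (ς d N q i') - prev p q t| :=
                abs_add_le _ _
              convert this using 2
              ring
          _ ≤ e/2 + e := add_le_add h1 h2.le
          _ = 3*e/2 := by ring
      have hb1 := hb (i-1) (by omega) hg1
      have hb2 := hb i hi hg2
      have hsplit : (1-s) * cv q p (i-1) + s * cv q p i - prev p q t
          = (1-s) * (cv q p (i-1) - prev p q t) + s * (cv q p i - prev p q t) := by ring
      rw [hsplit]
      calc |(1-s) * (cv q p (i-1) - prev p q t) + s * (cv q p i - prev p q t)|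
          ≤ |(1-s) * (cv q p (i-1) - prev p q t)| + |s * (cv q p i - prev p q t)| := abs_add_le _ _
        _ = (1-s) * |cv q p (i-1) - prev p q t| + s * |cv q p i - prev p q t| := by
            rw [abs_mul, abs_mul, abs_of_nonneg (by linarith), abs_of_nonneg hs0]
        _ ≤ (1-s) * (3*e/2) + s * (3*e/2) := by
            apply add_le_add
            · apply mul_le_mul_of_nonneg_left hb1 (by linarith)
            · apply mul_le_mul_of_nonneg_left hb2 hs0
        _ = 3*e/2 := by ring
        _ ≤ 2*e := by linarith




variable (d : ℕ) (hd : 1 ≤ d)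

def emin {d : ℕ} (S : St d) : ℝ := min (S.ε/2) (eta S/(100*((d:ℝ)+1)))

lemma emin_pos {d : ℕ} (S : St d) : 0 < emin S := by
  apply lt_min
  · linarith [S.εpos]
  · apply div_pos (eta_pos S)
    have : (0:ℝ) ≤ (d:ℝ) := Nat.cast_nonneg d
    positivity

def stseq : ℕ → St d
  | 0 => (step_exists d hd (fun _ _ _ => 0) (fun _ _ => continuous_const) 1 one_pos 1).choose
  | (k+1) => (step_exists d hd (stseq k).φ (stseq k).cont (emin (stseq k))
      (emin_pos _) (k+1)).choose

lemma stseq_succ_spec (k : ℕ) :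
    ((stseq d hd (k+1)).ε = emin (stseq d hd k)) ∧ (k+1 ≤ (stseq d hd (k+1)).N) ∧
    (∀ p q, ∀ t ∈ Icc (0:ℝ) 1,
      |(stseq d hd (k+1)).φ p q t - (stseq d hd k).φ p q t| ≤ 2 * (stseq d hd (k+1)).ε) := by
  have h := (step_exists d hd (stseq d hd k).φ (stseq d hd k).cont (emin (stseq d hd k))
      (emin_pos _) (k+1)).choose_spec
  obtain ⟨h1, h2, h3⟩ := h
  refine ⟨h1, h2, ?_⟩
  intro p q t ht
  have := h3 p q t ht
  calc |(stseq d hd (k+1)).φ p q t - (stseq d hd k).φ p q t|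
      ≤ 2 * emin (stseq d hd k) := this
    _ = 2 * (stseq d hd (k+1)).ε := (congrArg (fun x => 2*x) h1).symm

lemma eps_succ_le (k : ℕ) : (stseq d hd (k+1)).ε ≤ (stseq d hd k).ε / 2 := by
  rw [(stseq_succ_spec d hd k).1]
  exact min_le_left _ _

lemma eps_le_eta (k : ℕ) :
    (stseq d hd (k+1)).ε ≤ eta (stseq d hd k)/(100*((d:ℝ)+1)) := by
  rw [(stseq_succ_spec d hd k).1]
  exact min_le_right _ _

lemma stseq_N_ge (k : ℕ) : k + 1 ≤ (stseq d hd (k+1)).N :=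
  (stseq_succ_spec d hd k).2.1

lemma eps_shift (K : ℕ) : ∀ j : ℕ, (stseq d hd (K+1+j)).ε ≤ (stseq d hd (K+1)).ε * (1/2)^j := by
  intro j
  induction j with
  | zero => simp
  | succ j ih =>
    have h1 : K+1+(j+1) = (K+1+j)+1 := by omega
    rw [h1]
    calc (stseq d hd ((K+1+j)+1)).ε ≤ (stseq d hd (K+1+j)).ε / 2 := eps_succ_le d hd _
      _ ≤ ((stseq d hd (K+1)).ε * (1/2)^j) / 2 := by linarith
      _ = (stseq d hd (K+1)).ε * (1/2)^(j+1) := by ring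

lemma eps0_bound : ∀ k : ℕ, (stseq d hd k).ε ≤ (stseq d hd 0).ε * (1/2)^k := by
  intro k
  induction k with
  | zero => simp
  | succ k ih =>
    calc (stseq d hd (k+1)).ε ≤ (stseq d hd k).ε / 2 := eps_succ_le d hd _
      _ ≤ ((stseq d hd 0).ε * (1/2)^k) / 2 := by linarith
      _ = (stseq d hd 0).ε * (1/2)^(k+1) := by ring

/-- the difference sequence -/
def dphi (p : Fin d) (q : Fin (mm d)) (k : ℕ) (t : ℝ) : ℝ :=
  (stseq d hd (k+1)).φ p q (clamp t) - (stseq d hd k).φ p q (clamp t)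

lemma dphi_bound (p : Fin d) (q : Fin (mm d)) (k : ℕ) (t : ℝ) :
    ‖dphi d hd p q k t‖ ≤ 2 * (stseq d hd (k+1)).ε :=
  (stseq_succ_spec d hd k).2.2 p q (clamp t) (clamp_mem_Icc t)

lemma ubound_summable : Summable (fun k => 2 * (stseq d hd (k+1)).ε) := by
  apply Summable.of_nonneg_of_le (fun k => by linarith [(stseq d hd (k+1)).εpos])
    (fun k => ?_) (Summable.mul_left (2 * ((stseq d hd 0).ε * (1/2)))
      (summable_geometric_of_lt_one (by norm_num) (by norm_num : (1:ℝ)/2 < 1)))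
  have h := eps0_bound d hd (k+1)
  calc 2 * (stseq d hd (k+1)).ε ≤ 2 * ((stseq d hd 0).ε * (1/2)^(k+1)) := by linarith
    _ = 2 * ((stseq d hd 0).ε * (1/2)) * (1/2)^k := by ring

lemma dphi_summable (p : Fin d) (q : Fin (mm d)) (t : ℝ) :
    Summable (fun k => dphi d hd p q k t) := by
  apply Summable.of_norm
  apply Summable.of_nonneg_of_le (fun k => norm_nonneg _) (fun k => dphi_bound d hd p q k t)
    (ubound_summable d hd)

/-- the limit inner functions -/
def Φf (p : Fin d) (q : Fin (mm d)) : ℝ → ℝ :=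
  fun t => (stseq d hd 0).φ p q (clamp t) + ∑' k, dphi d hd p q k t

lemma Φf_cont (p : Fin d) (q : Fin (mm d)) : Continuous (Φf d hd p q) := by
  apply Continuous.add
  · exact ((stseq d hd 0).cont p q).comp continuous_clamp
  · apply continuous_tsum
    · intro k
      exact (((stseq d hd (k+1)).cont p q).comp continuous_clamp).sub
        (((stseq d hd k).cont p q).comp continuous_clamp)
    · exact ubound_summable d hd
    · intro k t
      exact dphi_bound d hd p q k t

set_option maxHeartbeats 1000000 in
lemma Φf_approx (K : ℕ) (p : Fin d) (q : Fin (mm d)) {t : ℝ} (ht : t ∈ Icc (0:ℝ) 1) :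
    |Φf d hd p q t - (stseq d hd K).φ p q t| ≤ 4 * (stseq d hd (K+1)).ε := by
  have hsum := dphi_summable d hd p q t
  have hsplit := (Summable.sum_add_tsum_nat_add (f := fun k => dphi d hd p q k t) K hsum).symm
  have htel : (∑ k ∈ Finset.range K, dphi d hd p q k t)
      = (stseq d hd K).φ p q (clamp t) - (stseq d hd 0).φ p q (clamp t) := by
    unfold dphi
    exact Finset.sum_range_sub (fun k => (stseq d hd k).φ p q (clamp t)) K
  have hclamp : clamp t = t := clamp_of_mem ht
  have heq : Φf d hd p q t - (stseq d hd K).φ p q t = ∑' k, dphi d hd p q (k + K) t := by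
    unfold Φf
    rw [hsplit, htel, hclamp]
    ring
  rw [heq]
  have htail : ∀ j : ℕ, ‖dphi d hd p q (j + K) t‖ ≤ 2 * (stseq d hd (K+1)).ε * (1/2)^j := by
    intro j
    calc ‖dphi d hd p q (j + K) t‖ ≤ 2 * (stseq d hd (j+K+1)).ε := dphi_bound d hd p q _ t
      _ ≤ 2 * ((stseq d hd (K+1)).ε * (1/2)^j) := by
          have h1 : j + K + 1 = K + 1 + j := by omega
          rw [h1]
          linarith [eps_shift d hd K j]
      _ = 2 * (stseq d hd (K+1)).ε * (1/2)^j := by ring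
  have hsum2 : Summable (fun j => dphi d hd p q (j + K) t) :=
    (summable_nat_add_iff K).mpr hsum
  have hsumgeo : Summable (fun j : ℕ => 2 * (stseq d hd (K+1)).ε * (1/2)^j) :=
    Summable.mul_left _ (summable_geometric_of_lt_one (by norm_num) (by norm_num))
  have hnorm : Summable (fun j => ‖dphi d hd p q (j + K) t‖) :=
    Summable.of_nonneg_of_le (fun _ => norm_nonneg _) htail hsumgeo
  calc |∑' j, dphi d hd p q (j + K) t| ≤ ∑' j, ‖dphi d hd p q (j + K) t‖ := by
        have h9 := norm_tsum_le_tsum_norm hnorm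
        rwa [Real.norm_eq_abs] at h9
    _ ≤ ∑' j : ℕ, 2 * (stseq d hd (K+1)).ε * (1/2)^j := Summable.tsum_le_tsum htail hnorm hsumgeo
    _ = 2 * (stseq d hd (K+1)).ε * (1/(1-1/2)) := by
        rw [tsum_mul_left, tsum_geometric_of_lt_one (by norm_num) (by norm_num)]
        norm_num
    _ = 4 * (stseq d hd (K+1)).ε := by ring



section GG

variable (d : ℕ) (hd : 1 ≤ d)

abbrev cube (d : ℕ) : Set (Fin d → ℝ) := Icc (0 : Fin d → ℝ) 1

lemma cube_coord {d : ℕ} {x : Fin d → ℝ} (hx : x ∈ cube d) (p : Fin d) : x p ∈ Icc (0:ℝ) 1 :=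
  ⟨hx.1 p, hx.2 p⟩

/-- the inner sums -/
def yq (q : Fin (mm d)) (x : Fin d → ℝ) : ℝ := ∑ p, Φf d hd p q (x p)

lemma yq_continuous (q : Fin (mm d)) : Continuous (yq d hd q) := by
  unfold yq
  apply continuous_finset_sum
  intro p _
  exact (Φf_cont d hd p q).comp (continuous_apply p)

/-- plateau value sums -/
def zval (k : ℕ) (q : Fin (mm d)) (J : Fin d → ℕ) : ℝ := ∑ p, (stseq d hd k).c q p (J p)

open Classical in
/-- the set of grids for which `x` is entirely within cells at stage `k` -/
def Good (k : ℕ) (x : Fin d → ℝ) : Finset (Fin (mm d)) :=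
  Finset.univ.filter (fun q => ∀ p, ∃ i, i ≤ (stseq d hd k).N + 1 ∧ x p ∈ cellSet d (stseq d hd k).N q i)

lemma good_card (k : ℕ) {x : Fin d → ℝ} (hx : x ∈ cube d) :
    d + 1 ≤ (Good d hd k x).card := by
  classical
  set N := (stseq d hd k).N with hNdef
  have hN1 : 1 ≤ N := by have := (stseq d hd k).Nbig; omega
  set Bad := Finset.univ.filter
    (fun q : Fin (mm d) => ¬ (∀ p, ∃ i, i ≤ N + 1 ∧ x p ∈ cellSet d N q i)) with hBad
  have hBadcard : Bad.card ≤ d := by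
    have hw : ∀ q ∈ Bad, ∃ p : Fin d, ∃ i, 1 ≤ i ∧ x p ∈ gapSet d N q i := by
      intro q hq
      rw [hBad, Finset.mem_filter] at hq
      push_neg at hq
      obtain ⟨p, hp⟩ := hq.2
      obtain ⟨i, hi, hcase⟩ := cover d hN1 q (cube_coord hx p)
      rcases hcase with hcell | ⟨hi1, hgap⟩
      · exact absurd hcell (hp i hi)
      · exact ⟨p, i, hi1, hgap⟩
    choose w iw hw1 hw2 using hw
    have hinj : ∀ q hq q' hq', w q hq = w q' hq' → q = q' := by
      intro q hq q' hq' he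
      have h1 := hw2 q hq
      have h2 := hw2 q' hq'
      rw [he] at h1
      exact gap_disjoint d hN1 h1 h2
    have : Bad.card ≤ Fintype.card (Fin d) := by
      rw [← Fintype.card_coe Bad]
      apply Fintype.card_le_of_injective (fun q => w q.1 q.2)
      intro a b hab
      exact Subtype.ext (hinj a.1 a.2 b.1 b.2 hab)
    simpa using this
  have hpart : (Good d hd k x).card + Bad.card = mm d := by
    rw [hBad]
    unfold Good
    rw [Finset.card_filter_add_card_filter_not]
    rw [Finset.card_univ, Fintype.card_fin]
  have hmm : mm d = 2 * d + 1 := rfl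
  omega

lemma good_witness {k : ℕ} {x : Fin d → ℝ} {q : Fin (mm d)} (hq : q ∈ Good d hd k x) :
    ∃ J : Fin d → ℕ, ∀ p, J p ≤ (stseq d hd k).N + 1 ∧ x p ∈ cellSet d (stseq d hd k).N q (J p) := by
  classical
  unfold Good at hq
  rw [Finset.mem_filter] at hq
  choose J hJ1 hJ2 using hq.2
  exact ⟨J, fun p => ⟨hJ1 p, hJ2 p⟩⟩

lemma y_approx (k : ℕ) {x : Fin d → ℝ} (hx : x ∈ cube d) {q : Fin (mm d)} {J : Fin d → ℕ}
    (hJ : ∀ p, J p ≤ (stseq d hd k).N + 1 ∧ x p ∈ cellSet d (stseq d hd k).N q (J p)) :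
    |yq d hd q x - zval d hd k q J| ≤ (d:ℝ) * (4 * (stseq d hd (k+1)).ε) := by
  unfold yq zval
  rw [← Finset.sum_sub_distrib]
  calc |∑ p, (Φf d hd p q (x p) - (stseq d hd k).c q p (J p))|
      ≤ ∑ p, |Φf d hd p q (x p) - (stseq d hd k).c q p (J p)| := Finset.abs_sum_le_sum_abs _ _
    _ ≤ ∑ _p : Fin d, 4 * (stseq d hd (k+1)).ε := by
        apply Finset.sum_le_sum
        intro p _
        have h1 := Φf_approx d hd k p q (cube_coord hx p)
        have h2 := (stseq d hd k).plateau q p (J p) (hJ p).1 (x p) (hJ p).2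
        calc |Φf d hd p q (x p) - (stseq d hd k).c q p (J p)|
            = |Φf d hd p q (x p) - (stseq d hd k).φ p q (x p)| := by rw [h2]
          _ ≤ 4 * (stseq d hd (k+1)).ε := h1
    _ = (d:ℝ) * (4 * (stseq d hd (k+1)).ε) := by
        rw [Finset.sum_const, Finset.card_univ, Fintype.card_fin]
        simp [nsmul_eq_mul]

lemma approx_le_eta (k : ℕ) : (d:ℝ) * (4 * (stseq d hd (k+1)).ε) ≤ eta (stseq d hd k) / 8 := by
  have h1 := eps_le_eta d hd k
  have h2 := eta_pos (stseq d hd k)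
  have h3 : (0:ℝ) ≤ (d:ℝ) := Nat.cast_nonneg d
  have key : (d:ℝ) * (4 * (eta (stseq d hd k)/(100*((d:ℝ)+1)))) ≤ eta (stseq d hd k) / 8 := by
    have hfrac : 4*(d:ℝ)/(100*((d:ℝ)+1)) ≤ 1/8 := by
      rw [div_le_div_iff₀ (by positivity) (by norm_num)]
      nlinarith
    have heq : (d:ℝ) * (4 * (eta (stseq d hd k)/(100*((d:ℝ)+1))))
        = (4*(d:ℝ)/(100*((d:ℝ)+1))) * eta (stseq d hd k) := by
      field_simp
    rw [heq]
    calc (4*(d:ℝ)/(100*((d:ℝ)+1))) * eta (stseq d hd k) ≤ (1/8) * eta (stseq d hd k) :=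
          mul_le_mul_of_nonneg_right hfrac h2.le
      _ = eta (stseq d hd k) / 8 := by ring
  calc (d:ℝ) * (4 * (stseq d hd (k+1)).ε) ≤ (d:ℝ) * (4 * (eta (stseq d hd k)/(100*((d:ℝ)+1)))) := by
        apply mul_le_mul_of_nonneg_left (by linarith) h3
    _ ≤ eta (stseq d hd k) / 8 := key

lemma zval_margin (k : ℕ) (q : Fin (mm d)) {J J' : Fin d → ℕ}
    (hJ : ∀ p, J p ≤ (stseq d hd k).N + 1) (hJ' : ∀ p, J' p ≤ (stseq d hd k).N + 1)
    (hne : J ≠ J') : eta (stseq d hd k) ≤ |zval d hd k q J - zval d hd k q J'| :=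
  (stseq d hd k).margin q J J' hJ hJ' hne

end GG



section HH

variable (d : ℕ) (hd : 1 ≤ d)

def trap (η z v : ℝ) : ℝ := ramp ((η/4 - |v - z|)/(η/8))

lemma trap_one {η z v : ℝ} (hη : 0 < η) (h : |v - z| ≤ η/8) : trap η z v = 1 := by
  apply ramp_of_one_le
  rw [le_div_iff₀ (by linarith)]
  linarith

lemma trap_zero {η z v : ℝ} (hη : 0 < η) (h : η/4 ≤ |v - z|) : trap η z v = 0 := by
  apply ramp_of_nonpos
  apply div_nonpos_of_nonpos_of_nonneg (by linarith) (by linarith)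

lemma trap_nonneg (η z v : ℝ) : 0 ≤ trap η z v := ramp_nonneg _

lemma trap_le_one (η z v : ℝ) : trap η z v ≤ 1 := ramp_le_one _

lemma trap_ne_zero {η z v : ℝ} (hη : 0 < η) (h : trap η z v ≠ 0) : |v - z| < η/4 := by
  by_contra hc
  push_neg at hc
  exact h (trap_zero hη hc)

lemma trap_continuous (η z : ℝ) : Continuous (fun v => trap η z v) := by
  unfold trap
  apply continuous_ramp.comp
  apply Continuous.div_const
  exact continuous_const.sub ((continuous_id.sub continuous_const).abs)

/-- index box -/
def Box (k : ℕ) : Finset (Fin d → ℕ) :=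
  Fintype.piFinset (fun _ : Fin d => Finset.range ((stseq d hd k).N + 2))

lemma mem_Box {k : ℕ} {J : Fin d → ℕ} : J ∈ Box d hd k ↔ ∀ p, J p ≤ (stseq d hd k).N + 1 := by
  unfold Box
  rw [Fintype.mem_piFinset]
  constructor
  · intro h p; have := h p; rw [Finset.mem_range] at this; omega
  · intro h p; rw [Finset.mem_range]; have := h p; omega

/-- center points of cubes -/
def ctr (k : ℕ) (q : Fin (mm d)) (J : Fin d → ℕ) : Fin d → ℝ :=
  fun p => clamp (ς d (stseq d hd k).N q (J p))

lemma ctr_mem_cube (k : ℕ) (q : Fin (mm d)) (J : Fin d → ℕ) : ctr d hd k q J ∈ cube d := by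
  constructor
  · intro p; exact (clamp_mem_Icc _).1
  · intro p; exact (clamp_mem_Icc _).2

lemma ctr_close (k : ℕ) (q : Fin (mm d)) {J : Fin d → ℕ} {x : Fin d → ℝ} (hx : x ∈ cube d)
    (hJ : ∀ p, x p ∈ cellSet d (stseq d hd k).N q (J p)) (p : Fin d) :
    |x p - ctr d hd k q J p| ≤ 1 / ((stseq d hd k).N : ℝ) := by
  have hN1 : 1 ≤ (stseq d hd k).N := by have := (stseq d hd k).Nbig; omega
  calc |x p - ctr d hd k q J p| ≤ |x p - ς d (stseq d hd k).N q (J p)| :=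
        clamp_near (cube_coord hx p)
    _ ≤ 1 / ((stseq d hd k).N : ℝ) := cell_near_sample d hN1 q (hJ p)

/-- the bump-sum outer functions -/
def gq (f : (Fin d → ℝ) → ℝ) (k : ℕ) (q : Fin (mm d)) (v : ℝ) : ℝ :=
  ∑ J ∈ Box d hd k, (f (ctr d hd k q J) / ((d:ℝ)+1)) * trap (eta (stseq d hd k)) (zval d hd k q J) v

lemma gq_continuous (f : (Fin d → ℝ) → ℝ) (k : ℕ) (q : Fin (mm d)) :
    Continuous (gq d hd f k q) := by
  unfold gq
  apply continuous_finset_sum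
  intro J _
  exact continuous_const.mul (trap_continuous _ _)

lemma gq_bound (f : (Fin d → ℝ) → ℝ) (k : ℕ) (q : Fin (mm d)) {M : ℝ}
    (hM : ∀ x ∈ cube d, |f x| ≤ M) (hM0 : 0 ≤ M) (v : ℝ) :
    |gq d hd f k q v| ≤ M / ((d:ℝ)+1) := by
  classical
  have hη := eta_pos (stseq d hd k)
  have hD1 : (0:ℝ) < (d:ℝ)+1 := by positivity
  by_cases hex : ∃ J₀ ∈ Box d hd k, trap (eta (stseq d hd k)) (zval d hd k q J₀) v ≠ 0
  · obtain ⟨J₀, hJ₀, hne⟩ := hex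
    have huniq : ∀ J ∈ Box d hd k, J ≠ J₀ →
        (f (ctr d hd k q J) / ((d:ℝ)+1)) * trap (eta (stseq d hd k)) (zval d hd k q J) v = 0 := by
      intro J hJ hJne
      rcases eq_or_ne (trap (eta (stseq d hd k)) (zval d hd k q J) v) 0 with h0 | h0
      · rw [h0, mul_zero]
      · exfalso
        have h1 := trap_ne_zero hη hne
        have h2 := trap_ne_zero hη h0
        have h3 := zval_margin d hd k q (mem_Box d hd |>.mp hJ) (mem_Box d hd |>.mp hJ₀) hJne
        have h4 : |zval d hd k q J - zval d hd k q J₀| < eta (stseq d hd k) / 2 := by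
          calc |zval d hd k q J - zval d hd k q J₀|
              = |(zval d hd k q J - v) + (v - zval d hd k q J₀)| := by ring_nf
            _ ≤ |zval d hd k q J - v| + |v - zval d hd k q J₀| := abs_add_le _ _
            _ = |v - zval d hd k q J| + |v - zval d hd k q J₀| := by rw [abs_sub_comm]
            _ < eta (stseq d hd k)/4 + eta (stseq d hd k)/4 := by linarith
            _ = eta (stseq d hd k)/2 := by ring
        linarith
    unfold gq
    rw [Finset.sum_eq_single_of_mem J₀ hJ₀ huniq]
    rw [abs_mul, abs_div]
    have h5 : |f (ctr d hd k q J₀)| ≤ M := hM _ (ctr_mem_cube d hd k q J₀)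
    have h6 : |trap (eta (stseq d hd k)) (zval d hd k q J₀) v| ≤ 1 := by
      rw [abs_of_nonneg (trap_nonneg _ _ _)]
      exact trap_le_one _ _ _
    calc |f (ctr d hd k q J₀)| / |((d:ℝ)+1)| * |trap (eta (stseq d hd k)) (zval d hd k q J₀) v|
        ≤ |f (ctr d hd k q J₀)| / |((d:ℝ)+1)| * 1 := by
          apply mul_le_mul_of_nonneg_left h6 (by positivity)
      _ = |f (ctr d hd k q J₀)| / ((d:ℝ)+1) := by
          rw [abs_of_pos hD1]; ring
      _ ≤ M / ((d:ℝ)+1) := by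
          gcongr
  · push_neg at hex
    unfold gq
    have : ∀ J ∈ Box d hd k,
        (f (ctr d hd k q J) / ((d:ℝ)+1)) * trap (eta (stseq d hd k)) (zval d hd k q J) v = 0 := by
      intro J hJ
      rw [hex J hJ, mul_zero]
    rw [Finset.sum_eq_zero this]
    rw [abs_zero]
    positivity

lemma gq_good_eval (f : (Fin d → ℝ) → ℝ) (k : ℕ) {q : Fin (mm d)} {x : Fin d → ℝ}
    (hx : x ∈ cube d) {J : Fin d → ℕ}
    (hJ : ∀ p, J p ≤ (stseq d hd k).N + 1 ∧ x p ∈ cellSet d (stseq d hd k).N q (J p)) :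
    gq d hd f k q (yq d hd q x) = f (ctr d hd k q J) / ((d:ℝ)+1) := by
  classical
  have hη := eta_pos (stseq d hd k)
  have hJB : J ∈ Box d hd k := (mem_Box d hd).mpr (fun p => (hJ p).1)
  have happrox := y_approx d hd k hx hJ
  have heta8 := approx_le_eta d hd k
  have hclose : |yq d hd q x - zval d hd k q J| ≤ eta (stseq d hd k)/8 := le_trans happrox heta8
  unfold gq
  rw [Finset.sum_eq_single_of_mem J hJB ?_]
  · rw [trap_one hη hclose, mul_one]
  · intro J' hJ' hne
    have hm := zval_margin d hd k q ((mem_Box d hd).mp hJ') (fun p => (hJ p).1) hne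
    have hfar : eta (stseq d hd k)/4 ≤ |yq d hd q x - zval d hd k q J'| := by
      have h1 : |zval d hd k q J' - zval d hd k q J| ≤
          |zval d hd k q J' - yq d hd q x| + |yq d hd q x - zval d hd k q J| := by
        calc |zval d hd k q J' - zval d hd k q J|
            = |(zval d hd k q J' - yq d hd q x) + (yq d hd q x - zval d hd k q J)| := by ring_nf
          _ ≤ _ := abs_add_le _ _
      rw [abs_sub_comm (zval d hd k q J') (yq d hd q x)] at h1
      have h2 := eta_pos (stseq d hd k)
      linarith
    rw [trap_zero hη hfar, mul_zero]

set_option maxHeartbeats 1000000 in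
lemma onestep (f : (Fin d → ℝ) → ℝ) (hf : ContinuousOn f (cube d)) {M : ℝ}
    (hM : ∀ x ∈ cube d, |f x| ≤ M) :
    ∃ g : Fin (mm d) → ℝ → ℝ, (∀ q, Continuous (g q)) ∧
      (∀ q v, |g q v| ≤ M / ((d:ℝ)+1)) ∧
      ∀ x ∈ cube d, |f x - ∑ q, g q (yq d hd q x)| ≤ ((4*(d:ℝ)+1)/(4*(d:ℝ)+4)) * M := by
  classical
  have h0cube : (0 : Fin d → ℝ) ∈ cube d := by
    constructor
    · exact le_refl _
    · intro p; norm_num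
  have hM0 : 0 ≤ M := le_trans (abs_nonneg _) (hM 0 h0cube)
  have hD1 : (0:ℝ) < (d:ℝ)+1 := by positivity
  rcases eq_or_lt_of_le hM0 with hMeq | hMpos
  · refine ⟨fun _ _ => 0, fun q => continuous_const, ?_, ?_⟩
    · intro q v; rw [abs_zero]; positivity
    · intro x hx
      simp only [Finset.sum_const_zero, sub_zero]
      have hθ : ((4*(d:ℝ)+1)/(4*(d:ℝ)+4)) * M = 0 := by rw [← hMeq]; ring
      rw [hθ]
      exact le_trans (hM x hx) (le_of_eq hMeq.symm)
  · set εf : ℝ := M / (4*(2*(d:ℝ)+1)*((d:ℝ)+1)) with hεf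
    have hεfpos : 0 < εf := by rw [hεf]; positivity
    have hucf : UniformContinuousOn f (cube d) :=
      isCompact_Icc.uniformContinuousOn_of_continuous hf
    rw [Metric.uniformContinuousOn_iff] at hucf
    obtain ⟨δ, hδpos, hδ⟩ := hucf εf hεfpos
    obtain ⟨n, hn⟩ := exists_nat_gt (1/δ)
    set k := n + 1 with hk
    have hNk : n + 1 ≤ (stseq d hd k).N := stseq_N_ge d hd n
    have hNpos : (0:ℝ) < ((stseq d hd k).N : ℝ) := by
      have := (stseq d hd k).Nbig
      have h1 : (1:ℕ) ≤ (stseq d hd k).N := by omega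
      exact_mod_cast h1
    have hNinv : 1/(((stseq d hd k).N : ℝ)) < δ := by
      have h1 : (1:ℝ)/δ < ((stseq d hd k).N : ℝ) := by
        calc (1:ℝ)/δ < (n:ℝ) := hn
          _ ≤ ((stseq d hd k).N : ℝ) := by exact_mod_cast le_trans (by omega) hNk
      rw [div_lt_iff₀ hNpos]
      rw [div_lt_iff₀ hδpos] at h1
      nlinarith
    refine ⟨fun q => gq d hd f k q, fun q => gq_continuous d hd f k q,
      fun q v => gq_bound d hd f k q hM hM0 v, ?_⟩
    intro x hx
    set G := Good d hd k x with hG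
    have hcard : d + 1 ≤ G.card := good_card d hd k hx
    have hcardle : G.card ≤ 2*d+1 := by
      have := Finset.card_le_univ G
      exact this.trans_eq (Fintype.card_fin _)
    have hwit : ∀ q ∈ G, ∃ J : Fin d → ℕ, ∀ p, J p ≤ (stseq d hd k).N + 1 ∧
        x p ∈ cellSet d (stseq d hd k).N q (J p) := fun q hq => good_witness d hd hq
    choose Jw hJw using hwit
    set Jx : Fin (mm d) → (Fin d → ℕ) := fun q => if h : q ∈ G then Jw q h else fun _ => 0
      with hJx
    have hJxg : ∀ q (hq : q ∈ G), ∀ p, Jx q p ≤ (stseq d hd k).N + 1 ∧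
        x p ∈ cellSet d (stseq d hd k).N q (Jx q p) := by
      intro q hq p
      have he : Jx q = Jw q hq := dif_pos hq
      rw [he]
      exact hJw q hq p
    have heval : ∀ q ∈ G, gq d hd f k q (yq d hd q x) = f (ctr d hd k q (Jx q)) / ((d:ℝ)+1) :=
      fun q hq => gq_good_eval d hd f k hx (hJxg q hq)
    have hfc : ∀ q ∈ G, |f x - f (ctr d hd k q (Jx q))| ≤ εf := by
      intro q hq
      have h1 : dist x (ctr d hd k q (Jx q)) < δ := by
        rw [dist_pi_lt_iff hδpos]
        intro p
        rw [Real.dist_eq]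
        calc |x p - ctr d hd k q (Jx q) p| ≤ 1/(((stseq d hd k).N : ℝ)) :=
              ctr_close d hd k q hx (fun p' => (hJxg q hq p').2) p
          _ < δ := hNinv
      have h2 := hδ x hx (ctr d hd k q (Jx q)) (ctr_mem_cube d hd k q (Jx q)) h1
      rw [Real.dist_eq] at h2
      exact h2.le
    -- split the sum
    have hsplit : (∑ q ∈ (Finset.univ \ G), gq d hd f k q (yq d hd q x))
        + ∑ q ∈ G, gq d hd f k q (yq d hd q x) = ∑ q, gq d hd f k q (yq d hd q x) :=
      Finset.sum_sdiff (Finset.subset_univ G)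
    set SB := ∑ q ∈ (Finset.univ \ G), gq d hd f k q (yq d hd q x) with hSBdef
    set SG := ∑ q ∈ G, gq d hd f k q (yq d hd q x) with hSGdef
    set Kc : ℝ := (G.card : ℝ) with hKc
    have hKc1 : (d:ℝ)+1 ≤ Kc := by rw [hKc]; exact_mod_cast hcard
    have hKc2 : Kc ≤ 2*(d:ℝ)+1 := by
      rw [hKc]
      have : ((G.card : ℕ):ℝ) ≤ ((2*d+1 : ℕ):ℝ) := by exact_mod_cast hcardle
      push_cast at this
      linarith
    have hSG : SG = ∑ q ∈ G, f (ctr d hd k q (Jx q)) / ((d:ℝ)+1) :=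
      Finset.sum_congr rfl heval
    have h2 : |Kc/((d:ℝ)+1) * f x - SG| ≤ Kc * εf / ((d:ℝ)+1) := by
      have he : Kc/((d:ℝ)+1) * f x - SG
          = (∑ q ∈ G, (f x - f (ctr d hd k q (Jx q)))) / ((d:ℝ)+1) := by
        rw [hSG, ← Finset.sum_div, Finset.sum_sub_distrib, Finset.sum_const, nsmul_eq_mul, hKc]
        ring
      rw [he, abs_div, abs_of_pos hD1, div_le_div_iff₀ hD1 hD1]
      have hb : |∑ q ∈ G, (f x - f (ctr d hd k q (Jx q)))| ≤ Kc * εf := by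
        calc |∑ q ∈ G, (f x - f (ctr d hd k q (Jx q)))|
            ≤ ∑ q ∈ G, |f x - f (ctr d hd k q (Jx q))| := Finset.abs_sum_le_sum_abs _ _
          _ ≤ ∑ _q ∈ G, εf := Finset.sum_le_sum (fun q hq => hfc q hq)
          _ = Kc * εf := by rw [Finset.sum_const, nsmul_eq_mul, hKc]
      nlinarith
    have h1 : |f x - Kc/((d:ℝ)+1) * f x| ≤ (Kc - ((d:ℝ)+1))/((d:ℝ)+1) * M := by
      have he : f x - Kc/((d:ℝ)+1) * f x = f x * ((((d:ℝ)+1) - Kc)/((d:ℝ)+1)) := by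
        field_simp
      rw [he, abs_mul, abs_div, abs_of_pos hD1]
      have h3 : |((d:ℝ)+1) - Kc| = Kc - ((d:ℝ)+1) := by
        rw [abs_of_nonpos (by linarith)]
        ring
      rw [h3]
      have h4 := hM x hx
      have h5 : 0 ≤ (Kc - ((d:ℝ)+1))/((d:ℝ)+1) := by
        apply div_nonneg (by linarith) hD1.le
      calc |f x| * ((Kc - ((d:ℝ)+1))/((d:ℝ)+1)) ≤ M * ((Kc - ((d:ℝ)+1))/((d:ℝ)+1)) :=
            mul_le_mul_of_nonneg_right h4 h5
        _ = (Kc - ((d:ℝ)+1))/((d:ℝ)+1) * M := by ring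
    have hSB : |SB| ≤ ((2*(d:ℝ)+1) - Kc) * M / ((d:ℝ)+1) := by
      have hcardB : ((Finset.univ \ G).card : ℝ) = (2*(d:ℝ)+1) - Kc := by
        rw [Finset.card_sdiff_of_subset (Finset.subset_univ G)]
        rw [Finset.card_univ]
        have h6 : Fintype.card (Fin (mm d)) = 2*d+1 := Fintype.card_fin _
        rw [h6, hKc]
        have h7 : G.card ≤ 2*d+1 := hcardle
        push_cast [Nat.cast_sub h7]
        ring
      calc |SB| ≤ ∑ q ∈ (Finset.univ \ G), |gq d hd f k q (yq d hd q x)| :=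
            Finset.abs_sum_le_sum_abs _ _
        _ ≤ ∑ _q ∈ (Finset.univ \ G), M/((d:ℝ)+1) :=
            Finset.sum_le_sum (fun q _ => gq_bound d hd f k q hM hM0 _)
        _ = ((Finset.univ \ G).card : ℝ) * (M/((d:ℝ)+1)) := by
            rw [Finset.sum_const, nsmul_eq_mul]
        _ = ((2*(d:ℝ)+1) - Kc) * M / ((d:ℝ)+1) := by rw [hcardB]; ring
    have htot : |f x - ∑ q, gq d hd f k q (yq d hd q x)|
        ≤ (Kc - ((d:ℝ)+1))/((d:ℝ)+1) * M + Kc * εf / ((d:ℝ)+1)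
          + ((2*(d:ℝ)+1) - Kc) * M / ((d:ℝ)+1) := by
      rw [← hsplit]
      calc |f x - (SB + SG)| = |(f x - Kc/((d:ℝ)+1) * f x) + (Kc/((d:ℝ)+1) * f x - SG) + (-SB)| := by
            congr 1
            ring
        _ ≤ |(f x - Kc/((d:ℝ)+1) * f x) + (Kc/((d:ℝ)+1) * f x - SG)| + |(-SB)| := abs_add_le _ _
        _ ≤ |f x - Kc/((d:ℝ)+1) * f x| + |Kc/((d:ℝ)+1) * f x - SG| + |(-SB)| := by
            have := abs_add_le (f x - Kc/((d:ℝ)+1) * f x) (Kc/((d:ℝ)+1) * f x - SG)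
            linarith
        _ ≤ (Kc - ((d:ℝ)+1))/((d:ℝ)+1) * M + Kc * εf / ((d:ℝ)+1)
              + ((2*(d:ℝ)+1) - Kc) * M / ((d:ℝ)+1) := by
            rw [abs_neg]
            exact add_le_add (add_le_add h1 h2) hSB
    have hfinal : (Kc - ((d:ℝ)+1))/((d:ℝ)+1) * M + Kc * εf / ((d:ℝ)+1)
          + ((2*(d:ℝ)+1) - Kc) * M / ((d:ℝ)+1) ≤ ((4*(d:ℝ)+1)/(4*(d:ℝ)+4)) * M := by
      have hεle : Kc * εf / ((d:ℝ)+1) ≤ (2*(d:ℝ)+1) * εf := by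
        have h8 : Kc / ((d:ℝ)+1) ≤ 2*(d:ℝ)+1 := by
          rw [div_le_iff₀ hD1]
          nlinarith
        have h9 : Kc * εf / ((d:ℝ)+1) = (Kc / ((d:ℝ)+1)) * εf := by ring
        rw [h9]
        exact mul_le_mul_of_nonneg_right h8 hεfpos.le
      have hεeq : (2*(d:ℝ)+1) * εf = M / (4*((d:ℝ)+1)) := by
        rw [hεf]
        field_simp
      have hMsum : (Kc - ((d:ℝ)+1))/((d:ℝ)+1) * M + ((2*(d:ℝ)+1) - Kc) * M / ((d:ℝ)+1)
          = (d:ℝ)/((d:ℝ)+1) * M := by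
        field_simp
        ring
      have hθeq : ((4*(d:ℝ)+1)/(4*(d:ℝ)+4)) * M = (d:ℝ)/((d:ℝ)+1) * M + M / (4*((d:ℝ)+1)) := by
        field_simp
      rw [hθeq]
      linarith
    exact le_trans htot hfinal

end HH



section II

variable (d : ℕ) (hd : 1 ≤ d)

def θc (d : ℕ) : ℝ := (4*(d:ℝ)+1)/(4*(d:ℝ)+4)

lemma θc_nonneg (d : ℕ) : 0 ≤ θc d := by
  unfold θc
  have : (0:ℝ) ≤ (d:ℝ) := Nat.cast_nonneg d
  positivity

lemma θc_lt_one (d : ℕ) : θc d < 1 := by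
  unfold θc
  have : (0:ℝ) ≤ (d:ℝ) := Nat.cast_nonneg d
  rw [div_lt_one (by positivity)]
  linarith

variable {f : (Fin d → ℝ) → ℝ} (hf : ContinuousOn f (cube d)) {M₀ : ℝ}
  (hb : ∀ x ∈ cube d, |f x| ≤ M₀)

def iterF (f : (Fin d → ℝ) → ℝ) (hf : ContinuousOn f (cube d)) (M₀ : ℝ)
    (hb : ∀ x ∈ cube d, |f x| ≤ M₀) :
    (n : ℕ) → {h : (Fin d → ℝ) → ℝ //
      ContinuousOn h (cube d) ∧ ∀ x ∈ cube d, |h x| ≤ θc d ^ n * M₀}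
  | 0 => ⟨f, hf, by intro x hx; simpa using hb x hx⟩
  | (n+1) => by
      refine ⟨(iterF f hf M₀ hb n).1 - fun x => ∑ q,
        (onestep d hd (iterF f hf M₀ hb n).1 (iterF f hf M₀ hb n).2.1
          (iterF f hf M₀ hb n).2.2).choose q (yq d hd q x), ?_, ?_⟩
      · apply ContinuousOn.sub (iterF f hf M₀ hb n).2.1
        apply Continuous.continuousOn
        apply continuous_finset_sum
        intro q _
        exact ((onestep d hd (iterF f hf M₀ hb n).1 (iterF f hf M₀ hb n).2.1
          (iterF f hf M₀ hb n).2.2).choose_spec.1 q).comp (yq_continuous d hd q)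
      · intro x hx
        have h3 := (onestep d hd (iterF f hf M₀ hb n).1 (iterF f hf M₀ hb n).2.1
          (iterF f hf M₀ hb n).2.2).choose_spec.2.2 x hx
        calc |((iterF f hf M₀ hb n).1 - fun x => ∑ q,
            (onestep d hd (iterF f hf M₀ hb n).1 (iterF f hf M₀ hb n).2.1
              (iterF f hf M₀ hb n).2.2).choose q (yq d hd q x)) x|
            = |(iterF f hf M₀ hb n).1 x - ∑ q,
              (onestep d hd (iterF f hf M₀ hb n).1 (iterF f hf M₀ hb n).2.1
                (iterF f hf M₀ hb n).2.2).choose q (yq d hd q x)| := rfl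
          _ ≤ θc d * (θc d ^ n * M₀) := h3
          _ = θc d ^ (n+1) * M₀ := by ring

def gsel (f : (Fin d → ℝ) → ℝ) (hf : ContinuousOn f (cube d)) (M₀ : ℝ)
    (hb : ∀ x ∈ cube d, |f x| ≤ M₀) (n : ℕ) : Fin (mm d) → ℝ → ℝ :=
  (onestep d hd (iterF d hd f hf M₀ hb n).1 (iterF d hd f hf M₀ hb n).2.1
    (iterF d hd f hf M₀ hb n).2.2).choose

lemma gsel_spec (f : (Fin d → ℝ) → ℝ) (hf : ContinuousOn f (cube d)) (M₀ : ℝ)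
    (hb : ∀ x ∈ cube d, |f x| ≤ M₀) (n : ℕ) :
    (∀ q, Continuous (gsel d hd f hf M₀ hb n q)) ∧
    (∀ q v, |gsel d hd f hf M₀ hb n q v| ≤ (θc d ^ n * M₀) / ((d:ℝ)+1)) ∧
    ∀ x ∈ cube d, |(iterF d hd f hf M₀ hb n).1 x
      - ∑ q, gsel d hd f hf M₀ hb n q (yq d hd q x)| ≤ θc d * (θc d ^ n * M₀) :=
  (onestep d hd (iterF d hd f hf M₀ hb n).1 (iterF d hd f hf M₀ hb n).2.1
    (iterF d hd f hf M₀ hb n).2.2).choose_spec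

lemma iterF_succ (f : (Fin d → ℝ) → ℝ) (hf : ContinuousOn f (cube d)) (M₀ : ℝ)
    (hb : ∀ x ∈ cube d, |f x| ≤ M₀) (n : ℕ) :
    (iterF d hd f hf M₀ hb (n+1)).1
      = (iterF d hd f hf M₀ hb n).1 - fun x => ∑ q, gsel d hd f hf M₀ hb n q (yq d hd q x) :=
  rfl

theorem parta (f : (Fin d → ℝ) → ℝ) (hf : ContinuousOn f (cube d)) :
    ∃ g : Fin (mm d) → ℝ → ℝ, (∀ q, Continuous (g q)) ∧
      ∀ x ∈ cube d, f x = ∑ q, g q (yq d hd q x) := by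
  classical
  obtain ⟨M₀, hb0⟩ := isCompact_Icc.exists_bound_of_continuousOn hf
  have hb : ∀ x ∈ cube d, |f x| ≤ M₀ := by
    intro x hx
    have := hb0 x hx
    rwa [Real.norm_eq_abs] at this
  have h0cube : (0 : Fin d → ℝ) ∈ cube d := by
    constructor
    · exact le_refl _
    · intro p; norm_num
  have hM0 : 0 ≤ M₀ := le_trans (abs_nonneg _) (hb 0 h0cube)
  have hθ0 := θc_nonneg d
  have hθ1 := θc_lt_one d
  have hD1 : (0:ℝ) < (d:ℝ)+1 := by positivity
  set g : Fin (mm d) → ℝ → ℝ := fun q v => ∑' n, gsel d hd f hf M₀ hb n q v with hg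
  have hsummable : Summable (fun n => (θc d ^ n * M₀) / ((d:ℝ)+1)) := by
    have h1 : Summable (fun n : ℕ => θc d ^ n) := summable_geometric_of_lt_one hθ0 hθ1
    have h2 := (h1.mul_right M₀).div_const ((d:ℝ)+1)
    convert h2 using 2
  have hgb : ∀ n q v, ‖gsel d hd f hf M₀ hb n q v‖ ≤ (θc d ^ n * M₀) / ((d:ℝ)+1) := by
    intro n q v
    rw [Real.norm_eq_abs]
    exact (gsel_spec d hd f hf M₀ hb n).2.1 q v
  have hgsum : ∀ q v, Summable (fun n => gsel d hd f hf M₀ hb n q v) := by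
    intro q v
    apply Summable.of_norm
    exact Summable.of_nonneg_of_le (fun n => norm_nonneg _) (fun n => hgb n q v) hsummable
  refine ⟨g, ?_, ?_⟩
  · intro q
    rw [hg]
    apply continuous_tsum
    · intro n
      exact (gsel_spec d hd f hf M₀ hb n).1 q
    · exact hsummable
    · intro n v
      exact hgb n q v
  · intro x hx
    have hpartial : ∀ n, (iterF d hd f hf M₀ hb n).1 x
        = f x - ∑ m ∈ Finset.range n, ∑ q, gsel d hd f hf M₀ hb m q (yq d hd q x) := by
      intro n
      induction n with
      | zero => simp [iterF]
      | succ n ih =>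
        rw [iterF_succ]
        simp only [Pi.sub_apply]
        rw [ih, Finset.sum_range_succ]
        ring
    have htend : Filter.Tendsto (fun n => (iterF d hd f hf M₀ hb n).1 x)
        Filter.atTop (nhds 0) := by
      have hb2 : ∀ n, ‖(iterF d hd f hf M₀ hb n).1 x‖ ≤ θc d ^ n * M₀ := by
        intro n
        rw [Real.norm_eq_abs]
        exact (iterF d hd f hf M₀ hb n).2.2 x hx
      have h1 : Filter.Tendsto (fun n : ℕ => θc d ^ n * M₀) Filter.atTop (nhds 0) := by
        have := (tendsto_pow_atTop_nhds_zero_of_lt_one hθ0 hθ1).mul_const M₀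
        simpa using this
      exact squeeze_zero_norm hb2 h1
    have hS : HasSum (fun n => ∑ q, gsel d hd f hf M₀ hb n q (yq d hd q x)) (f x) := by
      have hsum2 : Summable (fun n => ∑ q, gsel d hd f hf M₀ hb n q (yq d hd q x)) := by
        apply Summable.of_norm
        apply Summable.of_nonneg_of_le (fun n => norm_nonneg _) (fun n => ?_)
          ((hsummable.mul_left ((mm d : ℝ))))
        calc ‖∑ q, gsel d hd f hf M₀ hb n q (yq d hd q x)‖
            ≤ ∑ q : Fin (mm d), ‖gsel d hd f hf M₀ hb n q (yq d hd q x)‖ := norm_sum_le _ _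
          _ ≤ ∑ _q : Fin (mm d), (θc d ^ n * M₀) / ((d:ℝ)+1) :=
              Finset.sum_le_sum (fun q _ => hgb n q _)
          _ = (mm d : ℝ) * ((θc d ^ n * M₀) / ((d:ℝ)+1)) := by
              rw [Finset.sum_const, Finset.card_univ, Fintype.card_fin, nsmul_eq_mul]
      rw [hsum2.hasSum_iff_tendsto_nat]
      have : ∀ n, ∑ m ∈ Finset.range n, ∑ q, gsel d hd f hf M₀ hb m q (yq d hd q x)
          = f x - (iterF d hd f hf M₀ hb n).1 x := by
        intro n
        rw [hpartial n]
        ring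
      simp only [this]
      have := (tendsto_const_nhds (x := f x) (f := Filter.atTop (α := ℕ))).sub htend
      simpa using this
    have hgy : ∑ q, g q (yq d hd q x) = f x := by
      rw [hg]
      have h1 : ∑ q, (∑' n, gsel d hd f hf M₀ hb n q (yq d hd q x)) =
          ∑' n, ∑ q, gsel d hd f hf M₀ hb n q (yq d hd q x) := by
        rw [Summable.tsum_finsetSum]
        intro q _
        exact hgsum q _
      rw [h1, hS.tsum_eq]
    exact hgy.symm

end II



section JJ

variable (d : ℕ) (hd : 1 ≤ d)

/-- pure–pure separation : two far-apart points that are both `q`-pure have different `y_q` -/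
lemma pure_pure_ne {k : ℕ} {x x' : Fin d → ℝ} (hx : x ∈ cube d) (hx' : x' ∈ cube d)
    {ρ : ℝ} (hρpos : 0 < ρ) (hρ : ρ ≤ dist x x')
    (hNρ : 1/(((stseq d hd k).N : ℝ)) < ρ)
    {q : Fin (mm d)} (hq : q ∈ Good d hd k x) (hq' : q ∈ Good d hd k x') :
    yq d hd q x ≠ yq d hd q x' := by
  classical
  obtain ⟨J, hJ⟩ := good_witness d hd hq
  obtain ⟨J', hJ'⟩ := good_witness d hd hq'
  have hN1 : 1 ≤ (stseq d hd k).N := by have := (stseq d hd k).Nbig; omega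
  -- some coordinate is far
  have hfar : ∃ p, ρ ≤ dist (x p) (x' p) := by
    by_contra hc
    push_neg at hc
    have : dist x x' < ρ := (dist_pi_lt_iff hρpos).mpr hc
    linarith
  obtain ⟨p₀, hp₀⟩ := hfar
  have hJne : J ≠ J' := by
    intro hc
    have h1 := (hJ p₀).2
    have h2 := (hJ' p₀).2
    rw [hc] at h1
    have h3 := cell_diam d hN1 q h1 h2
    rw [Real.dist_eq] at hp₀
    rw [abs_sub_comm] at h3
    have := abs_sub_comm (x p₀) (x' p₀)
    -- |x p₀ - x' p₀| ≤ 1/N < ρ ≤ |x p₀ - x' p₀|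
    rw [abs_sub_comm] at h3
    linarith [h3, hp₀, hNρ]
  have hm := zval_margin d hd k q (fun p => (hJ p).1) (fun p => (hJ' p).1) hJne
  have ha := le_trans (y_approx d hd k hx hJ) (approx_le_eta d hd k)
  have ha' := le_trans (y_approx d hd k hx' hJ') (approx_le_eta d hd k)
  intro hyy
  have hηpos := eta_pos (stseq d hd k)
  have : |zval d hd k q J - zval d hd k q J'| < eta (stseq d hd k) := by
    calc |zval d hd k q J - zval d hd k q J'|
        = |(zval d hd k q J - yq d hd q x) + (yq d hd q x' - zval d hd k q J')| := by
          rw [hyy]; ring_nf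
      _ ≤ |zval d hd k q J - yq d hd q x| + |yq d hd q x' - zval d hd k q J'| := abs_add_le _ _
      _ = |yq d hd q x - zval d hd k q J| + |yq d hd q x' - zval d hd k q J'| := by
          rw [abs_sub_comm (zval d hd k q J)]
      _ ≤ eta (stseq d hd k)/8 + eta (stseq d hd k)/8 := add_le_add ha ha'
      _ < eta (stseq d hd k) := by linarith
  linarith

set_option maxHeartbeats 1600000 in
/-- every nonempty finite subset of the cube has a point with a "private" value slot -/
lemma private_slot (F : Finset (Fin d → ℝ)) (hF : ↑F ⊆ cube d) (hne : F.Nonempty) :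
    ∃ x ∈ F, ∃ q : Fin (mm d), ∀ x' ∈ F, x' ≠ x → yq d hd q x' ≠ yq d hd q x := by
  classical
  by_contra hcontra
  push_neg at hcontra
  have hq0 : (0:ℕ) < mm d := by unfold mm; omega
  have hcard2 : 1 < F.card := by
    obtain ⟨x, hx⟩ := hne
    obtain ⟨x', hx', hxne, _⟩ := hcontra x hx ⟨0, hq0⟩
    exact Finset.one_lt_card_iff.mpr ⟨x', x, hx', hx, hxne⟩
  set P := (F ×ˢ F).filter (fun ab => ab.1 ≠ ab.2) with hP
  have hPne : P.Nonempty := by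
    obtain ⟨a, b, ha, hb, hab⟩ := Finset.one_lt_card_iff.mp hcard2
    refine ⟨(a,b), ?_⟩
    rw [hP, Finset.mem_filter, Finset.mem_product]
    exact ⟨⟨ha, hb⟩, hab⟩
  set ρ := P.inf' hPne (fun ab => dist ab.1 ab.2) with hρ
  have hρpos : 0 < ρ := by
    rw [hρ, Finset.lt_inf'_iff]
    intro ab hab
    rw [hP, Finset.mem_filter] at hab
    exact dist_pos.mpr hab.2
  have hρle : ∀ x ∈ F, ∀ x' ∈ F, x ≠ x' → ρ ≤ dist x x' := by
    intro x hx x' hx' hne'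
    have := Finset.inf'_le (fun ab : (Fin d → ℝ) × (Fin d → ℝ) => dist ab.1 ab.2)
      (show (x, x') ∈ P by rw [hP, Finset.mem_filter, Finset.mem_product]; exact ⟨⟨hx, hx'⟩, hne'⟩)
    rw [← hρ] at this
    exact this
  obtain ⟨n, hn⟩ := exists_nat_gt (1/ρ)
  set k := n + 1 with hk
  have hNk : n + 1 ≤ (stseq d hd k).N := stseq_N_ge d hd n
  have hNpos : (0:ℝ) < ((stseq d hd k).N : ℝ) := by
    have := (stseq d hd k).Nbig
    have h1 : (1:ℕ) ≤ (stseq d hd k).N := by omega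
    exact_mod_cast h1
  have hNρ : 1/(((stseq d hd k).N : ℝ)) < ρ := by
    have h1 : (1:ℝ)/ρ < ((stseq d hd k).N : ℝ) := by
      calc (1:ℝ)/ρ < (n:ℝ) := hn
        _ ≤ ((stseq d hd k).N : ℝ) := by exact_mod_cast le_trans (by omega) hNk
    rw [div_lt_iff₀ hNpos]
    rw [div_lt_iff₀ hρpos] at h1
    nlinarith
  set Pure : Fin (mm d) → Finset (Fin d → ℝ) :=
    fun q => F.filter (fun x => q ∈ Good d hd k x) with hPure
  set Mixed : Fin (mm d) → Finset (Fin d → ℝ) :=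
    fun q => F.filter (fun x => q ∉ Good d hd k x) with hMixed
  have hPM : ∀ q, (Pure q).card + (Mixed q).card = F.card := by
    intro q
    rw [hPure, hMixed, Finset.card_filter, Finset.card_filter, ← Finset.sum_add_distrib]
    have h5 : ∀ x ∈ F, ((if q ∈ Good d hd k x then 1 else 0)
        + if q ∉ Good d hd k x then 1 else 0) = 1 := by
      intro x _
      by_cases h : q ∈ Good d hd k x <;> simp [h]
    rw [Finset.sum_congr rfl h5]
    simp
  have hinj : ∀ q, (Pure q).card ≤ (Mixed q).card := by
    intro q
    set pf : (Fin d → ℝ) → (Fin d → ℝ) := fun x =>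
      if h : ∃ x', x' ∈ F ∧ x' ≠ x ∧ yq d hd q x' = yq d hd q x then h.choose else x with hpfd
    have hpf : ∀ x ∈ Pure q, pf x ∈ F ∧ pf x ≠ x ∧ yq d hd q (pf x) = yq d hd q x := by
      intro x hx
      rw [hPure, Finset.mem_filter] at hx
      have hex : ∃ x', x' ∈ F ∧ x' ≠ x ∧ yq d hd q x' = yq d hd q x := by
        obtain ⟨x', h1, h2, h3⟩ := hcontra x hx.1 q
        exact ⟨x', h1, h2, h3⟩
      have hpfx : pf x = hex.choose := dif_pos hex
      rw [hpfx]
      exact hex.choose_spec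
    have hmaps : ∀ x ∈ Pure q, pf x ∈ Mixed q := by
      intro x hx
      obtain ⟨h1, h2, h3⟩ := hpf x hx
      have hxP := hx
      rw [hPure, Finset.mem_filter] at hxP
      rw [hMixed, Finset.mem_filter]
      refine ⟨h1, ?_⟩
      intro hgood
      exact pure_pure_ne d hd (hF h1) (hF hxP.1) hρpos
        (hρle _ h1 _ hxP.1 h2) hNρ hgood hxP.2 h3
    have hinjon : Set.InjOn pf (Pure q) := by
      intro x₁ h₁ x₂ h₂ hpe
      by_contra hne12
      obtain ⟨ha1, hb1, hc1⟩ := hpf x₁ h₁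
      obtain ⟨ha2, hb2, hc2⟩ := hpf x₂ h₂
      have hxx : yq d hd q x₁ = yq d hd q x₂ := by
        rw [← hc1, hpe, hc2]
      have hm₁ := Finset.mem_coe.mp h₁
      have hm₂ := Finset.mem_coe.mp h₂
      rw [hPure, Finset.mem_filter] at hm₁ hm₂
      exact pure_pure_ne d hd (hF hm₁.1) (hF hm₂.1) hρpos
        (hρle _ hm₁.1 _ hm₂.1 hne12) hNρ hm₁.2 hm₂.2 hxx
    exact Finset.card_le_card_of_injOn pf hmaps hinjon
  have hsum1 : ∑ q : Fin (mm d), (Mixed q).card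
      = ∑ x ∈ F, (Finset.univ.filter (fun q : Fin (mm d) => q ∉ Good d hd k x)).card := by
    simp only [hMixed, Finset.card_filter]
    rw [Finset.sum_comm]
  have hbadle : ∀ x ∈ F, (Finset.univ.filter (fun q : Fin (mm d) => q ∉ Good d hd k x)).card ≤ d := by
    intro x hx
    have h1 := good_card d hd k (hF hx)
    have he : Finset.univ.filter (fun q : Fin (mm d) => q ∉ Good d hd k x)
        = Finset.univ \ Good d hd k x := by
      ext q
      simp
    rw [he, Finset.card_sdiff_of_subset (Finset.subset_univ _), Finset.card_univ]
    have h2 : Fintype.card (Fin (mm d)) = 2*d+1 := Fintype.card_fin _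
    have h3 := Finset.card_le_univ (Good d hd k x)
    omega
  have hup : ∑ q : Fin (mm d), (Mixed q).card ≤ d * F.card := by
    rw [hsum1]
    calc ∑ x ∈ F, (Finset.univ.filter (fun q : Fin (mm d) => q ∉ Good d hd k x)).card
        ≤ ∑ _x ∈ F, d := Finset.sum_le_sum hbadle
      _ = d * F.card := by rw [Finset.sum_const, smul_eq_mul, mul_comm]
  have hlow : (2*d+1) * F.card ≤ 2 * ∑ q : Fin (mm d), (Mixed q).card := by
    have h4 : ∀ q : Fin (mm d), F.card ≤ 2 * (Mixed q).card := by
      intro q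
      have := hPM q
      have := hinj q
      omega
    calc (2*d+1) * F.card = ∑ _q : Fin (mm d), F.card := by
          rw [Finset.sum_const, Finset.card_univ, smul_eq_mul]
          rw [Fintype.card_fin, mm]
      _ ≤ ∑ q : Fin (mm d), 2 * (Mixed q).card := Finset.sum_le_sum (fun q _ => h4 q)
      _ = 2 * ∑ q : Fin (mm d), (Mixed q).card := by rw [Finset.mul_sum]
  have hFpos : 0 < F.card := Finset.card_pos.mpr hne
  have h2 : (2*d+1) * F.card ≤ (2*d) * F.card := by
    calc (2*d+1) * F.card ≤ 2 * ∑ q : Fin (mm d), (Mixed q).card := hlow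
      _ ≤ 2 * (d * F.card) := by omega
      _ = (2*d) * F.card := by ring
  have h3 : 2*d+1 ≤ 2*d := Nat.le_of_mul_le_mul_right h2 hFpos
  omega

/-- solvability on finite subsets -/
lemma finite_solvable (f : (Fin d → ℝ) → ℝ) : ∀ (F : Finset (Fin d → ℝ)), ↑F ⊆ cube d →
    ∃ w : Fin (mm d) → ℝ → ℝ, ∀ x ∈ F, ∑ q, w q (yq d hd q x) = f x := by
  classical
  intro F
  induction F using Finset.strongInduction with
  | _ F ih =>
    intro hF
    rcases F.eq_empty_or_nonempty with rfl | hne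
    · exact ⟨fun _ _ => 0, by simp⟩
    · obtain ⟨x₀, hx₀, q₀, hq₀⟩ := private_slot d hd F hF hne
      have hsub : F.erase x₀ ⊂ F := Finset.erase_ssubset hx₀
      obtain ⟨w, hw⟩ := ih (F.erase x₀) hsub
        (subset_trans (Finset.coe_subset.mpr (Finset.erase_subset _ _)) hF)
      set w' : Fin (mm d) → ℝ → ℝ := fun q v =>
        if q = q₀ ∧ v = yq d hd q₀ x₀ then w q v + (f x₀ - ∑ q', w q' (yq d hd q' x₀))
        else w q v with hw'
      refine ⟨w', ?_⟩
      intro x hx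
      rcases eq_or_ne x x₀ with rfl | hxne
      · have hterm : ∀ q : Fin (mm d), w' q (yq d hd q x)
            = w q (yq d hd q x) + (if q = q₀ then (f x - ∑ q', w q' (yq d hd q' x)) else 0) := by
          intro q
          rcases eq_or_ne q q₀ with rfl | hq
          · show (if q = q ∧ yq d hd q x = yq d hd q x then
                w q (yq d hd q x) + (f x - ∑ q', w q' (yq d hd q' x))
              else w q (yq d hd q x)) = _
            rw [if_pos ⟨rfl, rfl⟩, if_pos rfl]
          · show (if q = q₀ ∧ yq d hd q x = yq d hd q₀ x then
                w q (yq d hd q x) + (f x - ∑ q', w q' (yq d hd q' x))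
              else w q (yq d hd q x)) = _
            rw [if_neg (by intro hc; exact hq hc.1), if_neg hq]
            ring
        rw [Finset.sum_congr rfl (fun q _ => hterm q), Finset.sum_add_distrib]
        rw [Finset.sum_ite_eq' Finset.univ q₀ (fun _ => (f x - ∑ q', w q' (yq d hd q' x)))]
        simp only [Finset.mem_univ, if_true]
        ring
      · have hterm : ∀ q : Fin (mm d), w' q (yq d hd q x) = w q (yq d hd q x) := by
          intro q
          show (if q = q₀ ∧ yq d hd q x = yq d hd q₀ x₀ then
              w q (yq d hd q x) + (f x₀ - ∑ q', w q' (yq d hd q' x₀))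
            else w q (yq d hd q x)) = _
          rw [if_neg]
          rintro ⟨h1, h2⟩
          subst h1
          exact hq₀ x hx hxne h2
        rw [Finset.sum_congr rfl (fun q _ => hterm q)]
        exact hw x (Finset.mem_erase.mpr ⟨hxne, hx⟩)

end JJ



section KK

variable (d : ℕ) (hd : 1 ≤ d) (f : (Fin d → ℝ) → ℝ)

/-- slot condition : `s` is a slot used by some point of `F` -/
def slotOf (F : Finset (Fin d → ℝ)) (s : Fin (mm d) × ℝ) : Prop :=
  ∃ x ∈ F, s.2 = yq d hd s.1 x

/-- partial assignments viewed as graphs -/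
def Func (A : Set ((Fin (mm d) × ℝ) × ℝ)) : Prop :=
  ∀ s v v', (s, v) ∈ A → (s, v') ∈ A → v = v'

def Consistent (A : Set ((Fin (mm d) × ℝ) × ℝ)) : Prop :=
  ∀ F : Finset (Fin d → ℝ), ↑F ⊆ cube d →
    ∃ w : Fin (mm d) × ℝ → ℝ,
      (∀ s v, (s, v) ∈ A → slotOf d hd F s → w s = v) ∧
      ∀ x ∈ F, ∑ q, w (q, yq d hd q x) = f x

lemma consistent_empty : Consistent d hd f ∅ := by
  intro F hF
  obtain ⟨w, hw⟩ := finite_solvable d hd f F hF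
  exact ⟨fun s => w s.1 s.2, fun s v hsv _ => absurd hsv (Set.notMem_empty _), hw⟩

theorem partb : ∃ g : Fin (mm d) → ℝ → ℝ, ∀ x ∈ cube d, f x = ∑ q, g q (yq d hd q x) := by
  classical
  set 𝒮 : Set (Set ((Fin (mm d) × ℝ) × ℝ)) := {A | Func d A ∧ Consistent d hd f A} with h𝒮
  have hzorn : ∀ c ⊆ 𝒮, IsChain (· ⊆ ·) c → c.Nonempty → ∃ ub ∈ 𝒮, ∀ A ∈ c, A ⊆ ub := by
    intro c hc hchain hcne
    refine ⟨⋃₀ c, ⟨?_, ?_⟩, fun A hA => Set.subset_sUnion_of_mem hA⟩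
    · -- functionality of the union
      intro s v v' hv hv'
      obtain ⟨A₁, hA₁, hv1⟩ := hv
      obtain ⟨A₂, hA₂, hv2⟩ := hv'
      rcases hchain.total hA₁ hA₂ with hss | hss
      · exact (hc hA₂).1 s v v' (hss hv1) hv2
      · exact (hc hA₁).1 s v v' hv1 (hss hv2)
    · -- consistency of the union
      intro F hF
      -- find a single chain element containing all pairs with slots of F
      set SL : Finset (Fin (mm d) × ℝ) :=
        (F ×ˢ (Finset.univ : Finset (Fin (mm d)))).image
          (fun xq => (xq.2, yq d hd xq.2 xq.1)) with hSL
      have hclaim : ∀ SS : Finset (Fin (mm d) × ℝ), ∃ A₀ ∈ c,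
          ∀ p ∈ ⋃₀ c, p.1 ∈ SS → p ∈ A₀ := by
        intro SS
        induction SS using Finset.induction_on with
        | empty =>
          obtain ⟨A₀, hA₀⟩ := hcne
          exact ⟨A₀, hA₀, fun p _ hp => absurd hp (Finset.notMem_empty _)⟩
        | @insert s₀ SS hs₀ ih =>
          obtain ⟨A₁, hA₁, hA₁p⟩ := ih
          by_cases hex : ∃ p₀ ∈ ⋃₀ c, p₀.1 = s₀
          · obtain ⟨p₀, hp₀, hp₀s⟩ := hex
            obtain ⟨A₂, hA₂, hp₀2⟩ := hp₀
            rcases hchain.total hA₁ hA₂ with hss | hss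
            · refine ⟨A₂, hA₂, ?_⟩
              intro p hp hpSS
              rcases Finset.mem_insert.mp hpSS with he | hm
              · -- p has slot s₀, so p = p₀ by functionality of the union
                have hfun : Func d (⋃₀ c) := by
                  intro s v v' hv hv'
                  obtain ⟨B₁, hB₁, hv1⟩ := hv
                  obtain ⟨B₂, hB₂, hv2⟩ := hv'
                  rcases hchain.total hB₁ hB₂ with hss' | hss'
                  · exact (hc hB₂).1 s v v' (hss' hv1) hv2
                  · exact (hc hB₁).1 s v v' hv1 (hss' hv2)
                have hpp : p = p₀ := by
                  have h1 : p = (p.1, p.2) := rfl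
                  have h2 : p₀ = (p₀.1, p₀.2) := rfl
                  have hv : p.2 = p₀.2 := by
                    apply hfun s₀ p.2 p₀.2
                    · rw [← he]; rw [← h1]; exact hp
                    · rw [← hp₀s]; rw [← h2]; exact ⟨A₂, hA₂, hp₀2⟩
                  rw [h1, h2, he, hp₀s, hv]
                rw [hpp]
                exact hp₀2
              · exact hss (hA₁p p hp hm)
            · refine ⟨A₁, hA₁, ?_⟩
              intro p hp hpSS
              rcases Finset.mem_insert.mp hpSS with he | hm
              · have hfun : Func d (⋃₀ c) := by
                  intro s v v' hv hv'
                  obtain ⟨B₁, hB₁, hv1⟩ := hv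
                  obtain ⟨B₂, hB₂, hv2⟩ := hv'
                  rcases hchain.total hB₁ hB₂ with hss' | hss'
                  · exact (hc hB₂).1 s v v' (hss' hv1) hv2
                  · exact (hc hB₁).1 s v v' hv1 (hss' hv2)
                have hpp : p = p₀ := by
                  have hv : p.2 = p₀.2 := by
                    apply hfun s₀ p.2 p₀.2
                    · rw [← he]; exact hp
                    · rw [← hp₀s]; exact ⟨A₂, hA₂, hp₀2⟩
                  have h1 : p = (p.1, p.2) := rfl
                  have h2 : p₀ = (p₀.1, p₀.2) := rfl
                  rw [h1, h2, he, hp₀s, hv]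
                rw [hpp]
                exact hss hp₀2
              · exact hA₁p p hp hm
          · refine ⟨A₁, hA₁, ?_⟩
            intro p hp hpSS
            rcases Finset.mem_insert.mp hpSS with he | hm
            · exact absurd ⟨p, hp, he⟩ hex
            · exact hA₁p p hp hm
      obtain ⟨A₀, hA₀c, hA₀⟩ := hclaim SL
      obtain ⟨w, hw1, hw2⟩ := (hc hA₀c).2 F hF
      refine ⟨w, ?_, hw2⟩
      intro s v hsv hslot
      apply hw1 s v ?_ hslot
      apply hA₀ (s, v) hsv
      obtain ⟨x, hx, hxy⟩ := hslot
      rw [hSL, Finset.mem_image]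
      refine ⟨(x, s.1), ?_, ?_⟩
      · rw [Finset.mem_product]
        exact ⟨hx, Finset.mem_univ _⟩
      · simp only
        rw [← hxy]
  obtain ⟨M, -, hMmax⟩ := zorn_subset_nonempty 𝒮 hzorn ∅
    ⟨(fun s v v' h _ => absurd h (Set.notMem_empty _)), consistent_empty d hd f⟩
  have hM𝒮 : M ∈ 𝒮 := hMmax.1
  -- totality of the maximal assignment
  have htotal : ∀ s : Fin (mm d) × ℝ, ∃ v, (s, v) ∈ M := by
    by_contra hc
    push_neg at hc
    obtain ⟨s₀, hs₀⟩ := hc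
    set Q : Finset (Fin d → ℝ) → Set ℝ := fun F => {α | ∃ w : Fin (mm d) × ℝ → ℝ,
      (∀ s v, (s, v) ∈ M → slotOf d hd F s → w s = v) ∧
      (∀ x ∈ F, ∑ q, w (q, yq d hd q x) = f x) ∧ w s₀ = α} with hQ
    have hQne : ∀ F : Finset (Fin d → ℝ), ↑F ⊆ cube d → (Q F).Nonempty := by
      intro F hF
      obtain ⟨w, hw1, hw2⟩ := hM𝒮.2 F hF
      exact ⟨w s₀, w, hw1, hw2, rfl⟩
    have hQmono : ∀ F F' : Finset (Fin d → ℝ), Q (F ∪ F') ⊆ Q F := by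
      intro F F' α hα
      obtain ⟨w, hw1, hw2, hw3⟩ := hα
      refine ⟨w, ?_, ?_, hw3⟩
      · intro s v hsv hslot
        apply hw1 s v hsv
        obtain ⟨x, hx, hxy⟩ := hslot
        exact ⟨x, Finset.mem_union_left _ hx, hxy⟩
      · intro x hx
        exact hw2 x (Finset.mem_union_left _ hx)
    have hQaffine : ∀ F : Finset (Fin d → ℝ), ∀ α β, α ∈ Q F → β ∈ Q F → α ≠ β →
        ∀ c₀ : ℝ, c₀ ∈ Q F := by
      intro F α β hα hβ hαβ c₀
      obtain ⟨w, hw1, hw2, hw3⟩ := hα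
      obtain ⟨w', hw1', hw2', hw3'⟩ := hβ
      set lam := (c₀ - α)/(β - α) with hlam
      refine ⟨fun s => w s + lam * (w' s - w s), ?_, ?_, ?_⟩
      · intro s v hsv hslot
        show w s + lam * (w' s - w s) = v
        rw [hw1 s v hsv hslot, hw1' s v hsv hslot]
        ring
      · intro x hx
        show ∑ q, (w (q, yq d hd q x) + lam * (w' (q, yq d hd q x) - w (q, yq d hd q x))) = f x
        rw [Finset.sum_add_distrib]
        have h1 : ∑ q, lam * (w' (q, yq d hd q x) - w (q, yq d hd q x))
            = lam * ((∑ q, w' (q, yq d hd q x)) - ∑ q, w (q, yq d hd q x)) := by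
          rw [← Finset.mul_sum, Finset.sum_sub_distrib]
        rw [h1, hw2 x hx, hw2' x hx]
        ring
      · show w s₀ + lam * (w' s₀ - w s₀) = c₀
        rw [hw3, hw3']
        have hne : β - α ≠ 0 := by
          intro hc0
          exact hαβ (sub_eq_zero.mp hc0).symm
        rw [hlam]
        field_simp
        ring
    have hαstar : ∃ α : ℝ, ∀ F : Finset (Fin d → ℝ), ↑F ⊆ cube d → α ∈ Q F := by
      by_cases hall : ∀ F : Finset (Fin d → ℝ), ↑F ⊆ cube d → ∀ α : ℝ, α ∈ Q F
      · exact ⟨0, fun F hF => hall F hF 0⟩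
      · push_neg at hall
        obtain ⟨F₀, hF₀, β₀, hβ₀⟩ := hall
        obtain ⟨α₀, hα₀⟩ := hQne F₀ hF₀
        refine ⟨α₀, ?_⟩
        intro F hF
        have hun : ↑(F ∪ F₀) ⊆ cube d := by
          rw [Finset.coe_union]
          exact Set.union_subset hF hF₀
        obtain ⟨α₁, hα₁⟩ := hQne (F ∪ F₀) hun
        have hα₁F₀ : α₁ ∈ Q F₀ := by
          have := hQmono F₀ F
          rw [Finset.union_comm] at this
          exact this hα₁
        have hα₁α₀ : α₁ = α₀ := by
          by_contra hne
          exact hβ₀ (hQaffine F₀ α₁ α₀ hα₁F₀ hα₀ hne β₀)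
        rw [← hα₁α₀]
        exact hQmono F F₀ hα₁
    obtain ⟨αs, hαs⟩ := hαstar
    -- extend M, contradicting maximality
    set M' := M ∪ {(s₀, αs)} with hM'
    have hM'𝒮 : M' ∈ 𝒮 := by
      constructor
      · intro s v v' hv hv'
        rcases hv with hv | hv
        · rcases hv' with hv' | hv'
          · exact hM𝒮.1 s v v' hv hv'
          · exfalso
            rw [Set.mem_singleton_iff] at hv'
            have h1 : s = s₀ := congrArg Prod.fst hv'
            rw [h1] at hv
            exact hs₀ v hv
        · rw [Set.mem_singleton_iff] at hv
          have h1 : s = s₀ := congrArg Prod.fst hv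
          rcases hv' with hv' | hv'
          · exfalso
            rw [h1] at hv'
            exact hs₀ v' hv'
          · rw [Set.mem_singleton_iff] at hv'
            have h2 := congrArg Prod.snd hv
            have h3 := congrArg Prod.snd hv'
            simp only at h2 h3
            rw [h2, h3]
      · intro F hF
        obtain ⟨w, hw1, hw2, hw3⟩ := hαs F hF
        refine ⟨w, ?_, hw2⟩
        intro s v hsv hslot
        rcases hsv with hsv | hsv
        · exact hw1 s v hsv hslot
        · rw [Set.mem_singleton_iff] at hsv
          have h1 : s = s₀ := congrArg Prod.fst hsv
          have h2 : v = αs := congrArg Prod.snd hsv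
          rw [h1, h2, hw3]
    have hMM' : M ⊆ M' := Set.subset_union_left
    have := hMmax.2 hM'𝒮 hMM'
    have hmem : (s₀, αs) ∈ M := this (Set.mem_union_right _ rfl)
    exact hs₀ αs hmem
  -- define the outer functions
  set g : Fin (mm d) → ℝ → ℝ := fun q v => (htotal (q, v)).choose with hg
  have hgM : ∀ q v, ((q, v), g q v) ∈ M := fun q v => (htotal (q, v)).choose_spec
  refine ⟨g, ?_⟩
  intro x hx
  have hsing : ↑({x} : Finset (Fin d → ℝ)) ⊆ cube d := by
    intro y hy
    rw [Finset.coe_singleton, Set.mem_singleton_iff] at hy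
    rw [hy]
    exact hx
  obtain ⟨w, hw1, hw2⟩ := hM𝒮.2 {x} hsing
  have heq : ∀ q : Fin (mm d), w (q, yq d hd q x) = g q (yq d hd q x) := by
    intro q
    apply hw1 _ _ (hgM q (yq d hd q x))
    exact ⟨x, Finset.mem_singleton_self x, rfl⟩
  have := hw2 x (Finset.mem_singleton_self x)
  rw [Finset.sum_congr rfl (fun q _ => heq q)] at this
  exact this.symm

end KK

end
end KST

/-- There exist universal continuous inner functions `φ_{pq} : [0,1] → ℝ`
(`p = 1,...,d`, `q = 1,...,2d+1`) such that (a) every continuous function on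
the cube `[0,1]^d` is represented as `∑_q g_q(∑_p φ_{pq}(x_p))` with continuous
outer functions `g_q` (Kolmogorov's superposition theorem), and (b) every
function on `[0,1]^d`, without any regularity assumption, is represented in
the same form with (generally discontinuous) outer functions `g_q`. -/
theorem stmt17 (d : ℕ) (hd : 2 ≤ d) :
    ∃ φ : Fin d → Fin (2 * d + 1) → ℝ → ℝ,
      (∀ p q, ContinuousOn (φ p q) (Set.Icc (0 : ℝ) 1)) ∧
      (∀ f : (Fin d → ℝ) → ℝ, ContinuousOn f (Set.Icc (0 : Fin d → ℝ) 1) →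
        ∃ g : Fin (2 * d + 1) → ℝ → ℝ, (∀ q, Continuous (g q)) ∧
          ∀ x ∈ Set.Icc (0 : Fin d → ℝ) 1, f x = ∑ q, g q (∑ p, φ p q (x p))) ∧
      (∀ f : (Fin d → ℝ) → ℝ,
        ∃ g : Fin (2 * d + 1) → ℝ → ℝ,
          ∀ x ∈ Set.Icc (0 : Fin d → ℝ) 1, f x = ∑ q, g q (∑ p, φ p q (x p))) := by
  have hd1 : 1 ≤ d := by omega
  refine ⟨fun p (q : Fin (KST.mm d)) => KST.Φf d hd1 p q, ?_, ?_, ?_⟩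
  · intro p q
    exact (KST.Φf_cont d hd1 p q).continuousOn
  · intro f hf
    obtain ⟨g, hgc, hgr⟩ := KST.parta d hd1 f hf
    exact ⟨g, hgc, fun x hx => hgr x hx⟩
  · intro f
    obtain ⟨g, hgr⟩ := KST.partb d hd1 f
    exact ⟨g, fun x hx => hgr x hx⟩
end

section
/- Let Q be a compact subset of the real line, let d be its diameter, and let λ > 0. Then there exists a function σ : ℝ → ℝ which is infinitely differentiable, sigmoidal, strictly increasing on (−∞, d), λ-strictly increasing on [d, +∞), and satisfies the following property: for every continuous function f on Q and every ε > 0 there exist real numbers c_1, c_2, θ_1, θ_2 such that |f(x) − c_1 σ(x − θ_1) − c_2 σ(x − θ_2)| < ε for all x ∈ Q. -/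
set_option maxHeartbeats 1000000

open Polynomial Filter Real Set TopologicalSpace

lemma st19_poly_contDiff (p : ℝ[X]) : ContDiff ℝ (⊤:ℕ∞) fun x => p.eval x := by
  induction p using Polynomial.induction_on' with
  | add p q hp hq => simpa [Polynomial.eval_add] using hp.add hq
  | monomial n a => simpa [Polynomial.eval_monomial] using (contDiff_const (c := a)).mul (contDiff_id.pow n)

noncomputable def st19_sig0 (x : ℝ) : ℝ := Real.exp x / (1 + Real.exp x)

lemma st19_sig0_denom_pos (x : ℝ) : 0 < 1 + Real.exp x := by positivity

lemma st19_sig0_contDiff : ContDiff ℝ (⊤:ℕ∞) st19_sig0 :=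
  Real.contDiff_exp.div (contDiff_const.add Real.contDiff_exp) fun x => (st19_sig0_denom_pos x).ne'

lemma st19_sig0_strictMono : StrictMono st19_sig0 := by
  intro x y h
  unfold st19_sig0
  rw [div_lt_div_iff₀ (st19_sig0_denom_pos x) (st19_sig0_denom_pos y)]
  have h2 := Real.exp_lt_exp.2 h
  nlinarith [Real.exp_pos x, Real.exp_pos y]

lemma st19_one_sub_sig0 (x : ℝ) : 1 - st19_sig0 x = (1 + Real.exp x)⁻¹ := by
  unfold st19_sig0
  field_simp
  ring

lemma st19_sig0_le_one (x : ℝ) : st19_sig0 x ≤ 1 := by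
  have := st19_one_sub_sig0 x
  have h2 : 0 < (1 + Real.exp x)⁻¹ := by positivity
  linarith

lemma st19_one_sub_sig0_le (x : ℝ) : 1 - st19_sig0 x ≤ Real.exp (-x) := by
  rw [st19_one_sub_sig0, Real.exp_neg]
  have h1 := Real.exp_pos x
  rw [inv_le_inv₀ (by linarith) h1]
  linarith

lemma st19_sig0_tendsto_atBot : Tendsto st19_sig0 atBot (nhds 0) := by
  have h := Real.tendsto_exp_atBot.div (tendsto_const_nhds.add Real.tendsto_exp_atBot) (by norm_num : (1:ℝ) + 0 ≠ 0)
  rw [show (0:ℝ) = 0 / (1 + 0) by norm_num]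
  exact h

lemma st19_sig0_tendsto_atTop : Tendsto st19_sig0 atTop (nhds 1) := by
  have h2 : Tendsto (fun x : ℝ => (1 + Real.exp x)⁻¹) atTop (nhds 0) :=
    (tendsto_atTop_add_const_left _ 1 Real.tendsto_exp_atTop).inv_tendsto_atTop
  have h3 : Tendsto (fun x : ℝ => 1 - (1 + Real.exp x)⁻¹) atTop (nhds (1 - 0)) :=
    tendsto_const_nhds.sub h2
  have h4 : Tendsto (fun x : ℝ => 1 - (1 + Real.exp x)⁻¹) atTop (nhds 1) := by simpa using h3
  refine h4.congr fun x => ?_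
  rw [← st19_one_sub_sig0]; ring

lemma st19_dense_polys (Q : Set ℝ) (hQ : IsCompact Q) :
    ∃ p : ℕ → ℝ[X], p 0 = 0 ∧
      ∀ f : ℝ → ℝ, ContinuousOn f Q → ∀ ε : ℝ, 0 < ε →
        ∃ n, ∀ x ∈ Q, |f x - (p n).eval x| < ε := by
  have hcs : CompactSpace Q := isCompact_iff_compactSpace.mp hQ
  have hne : Nonempty C(Q, ℝ) := ⟨0⟩
  have hsub : Q ⊆ Set.Icc (sInf Q) (sSup Q) := fun x hx =>
    ⟨csInf_le hQ.bddBelow hx, le_csSup hQ.bddAbove hx⟩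
  have key : ∀ (g : C(Q, ℝ)) (k : ℕ),
      ∃ q : ℝ[X], ∀ x : Q, |g x - q.eval (x : ℝ)| < 1 / (k + 1) := by
    intro g k
    obtain ⟨G, hG⟩ := g.exists_restrict_eq hQ.isClosed
    obtain ⟨q, hq⟩ := exists_polynomial_near_of_continuousOn (sInf Q) (sSup Q) G
      G.continuous.continuousOn (1 / (k + 1)) (by positivity)
    refine ⟨q, fun x => ?_⟩
    have h1 := hq x (hsub x.2)
    have h2 : G (x : ℝ) = g x := by
      have := congrFun (congrArg DFunLike.coe hG) x
      simpa using this
    rw [abs_sub_comm]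
    rw [h2] at h1
    exact h1
  choose P hP using key
  let h : ℕ → C(Q, ℝ) := denseSeq C(Q, ℝ)
  have hd : DenseRange h := denseRange_denseSeq _
  refine ⟨fun n => Nat.casesOn n 0 (fun m => P (h m.unpair.1) m.unpair.2), rfl, ?_⟩
  intro f hf ε hε
  set F : C(Q, ℝ) := ⟨fun x => f x, continuousOn_iff_continuous_restrict.mp hf⟩ with hF
  obtain ⟨n, hn⟩ := Metric.denseRange_iff.mp hd F (ε / 2) (by positivity)
  obtain ⟨k, hk⟩ := exists_nat_one_div_lt (show (0:ℝ) < ε / 2 by positivity)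
  refine ⟨Nat.pair n k + 1, ?_⟩
  intro x hx
  have e1 : |f x - h n ⟨x, hx⟩| ≤ dist F (h n) := by
    have := ContinuousMap.dist_apply_le_dist (f := F) (g := h n) ⟨x, hx⟩
    rw [Real.dist_eq] at this
    exact this
  have e2 := hP (h n) k ⟨x, hx⟩
  have e3 : (Nat.pair n k).unpair = (n, k) := Nat.unpair_pair n k
  simp only [e3]
  calc |f x - (P (h n) k).eval x|
      ≤ |f x - h n ⟨x, hx⟩| + |h n ⟨x, hx⟩ - (P (h n) k).eval x| := abs_sub_le _ _ _
    _ < ε / 2 + (1 / (k + 1)) := add_lt_add_of_le_of_lt (le_of_lt (lt_of_le_of_lt e1 hn)) e2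
    _ < ε / 2 + ε / 2 := by linarith
    _ = ε := by ring

/-- For a compact set `Q ⊆ ℝ` with diameter `d` and any `λ > 0`, there is an
infinitely differentiable sigmoidal function `σ : ℝ → ℝ`, strictly increasing
on `(-∞, d)` and `λ`-strictly increasing on `[d, +∞)`, such that every
continuous function on `Q` can be approximated within any `ε > 0` by
`c₁σ(x − θ₁) + c₂σ(x − θ₂)`. -/
theorem stmt19 (Q : Set ℝ) (hQ : IsCompact Q) (lam : ℝ) (hlam : 0 < lam)
    (d : ℝ) (hd : d = Metric.diam Q) :
    ∃ σ : ℝ → ℝ,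
      ContDiff ℝ (⊤ : ℕ∞) σ ∧
      Filter.Tendsto σ Filter.atBot (nhds 0) ∧
      Filter.Tendsto σ Filter.atTop (nhds 1) ∧
      StrictMonoOn σ (Set.Iio d) ∧
      (∃ u : ℝ → ℝ, StrictMonoOn u (Set.Ici d) ∧ ∀ x ∈ Set.Ici d, |σ x - u x| ≤ lam) ∧
      (∀ f : ℝ → ℝ, ContinuousOn f Q → ∀ ε : ℝ, 0 < ε →
        ∃ c1 c2 θ1 θ2 : ℝ,
          ∀ x ∈ Q, |f x - c1 * σ (x - θ1) - c2 * σ (x - θ2)| < ε) := by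
  classical
  obtain ⟨p, hp0, hpd⟩ := st19_dense_polys Q hQ
  set a := sInf Q with ha
  have hd0 : 0 ≤ d := hd ▸ Metric.diam_nonneg
  have hQab : ∀ x ∈ Q, a ≤ x ∧ x ≤ a + d := by
    intro x hx
    have h1 : a ≤ x := csInf_le hQ.bddBelow hx
    have h2 : a ∈ Q := hQ.sInf_mem ⟨x, hx⟩
    have h3 : dist x a ≤ Metric.diam Q := Metric.dist_le_diam_of_mem hQ.isBounded hx h2
    rw [Real.dist_eq, ← hd] at h3
    exact ⟨h1, by linarith [(abs_le.mp h3).2]⟩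
  set m := min lam 1 with hm
  have hm0 : 0 < m := lt_min hlam one_pos
  have hmlam : m ≤ lam := min_le_left _ _
  have hm1 : m ≤ 1 := min_le_right _ _
  set A := max (d + 1) (1 + Real.log (2 / m)) with hA
  have hA1 : d + 1 ≤ A := le_max_left _ _
  have hAexp : Real.exp (-(A - 1)) ≤ m / 2 := by
    have h1 : Real.log (2 / m) ≤ A - 1 := by
      have := le_max_right (d + 1) (1 + Real.log (2 / m)); linarith
    have h2 : (2 : ℝ) / m ≤ Real.exp (A - 1) := by
      calc (2:ℝ)/m = Real.exp (Real.log (2 / m)) := (Real.exp_log (by positivity)).symm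
        _ ≤ _ := Real.exp_le_exp.2 h1
    have h3 : (0:ℝ) < 2 / m := by positivity
    calc Real.exp (-(A-1)) = (Real.exp (A-1))⁻¹ := Real.exp_neg _
      _ ≤ ((2:ℝ)/m)⁻¹ := by rw [inv_le_inv₀ (Real.exp_pos _) h3]; exact h2
      _ = m / 2 := by rw [inv_div]
  set w : ℕ → ℝ := fun n => A + n * (d + 3) with hw
  have hd3 : (0 : ℝ) < d + 3 := by linarith
  set η : ℕ → ℝ := fun n => m / 2 * (1 / (n + 1)) with hη
  have hηpos : ∀ n : ℕ, 0 < η n := by intro n; rw [hη]; positivity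
  have hwbound : ∀ n : ℕ, Real.exp (-(w n - 1)) ≤ η n := by
    intro n
    have e1 : -(w n - 1) = -(A - 1) + -((n : ℝ) * (d + 3)) := by rw [hw]; ring
    rw [e1, Real.exp_add, hη]
    have e3 : (n : ℝ) ≤ (n : ℝ) * (d + 3) := by nlinarith [(Nat.cast_nonneg n : (0:ℝ) ≤ (n:ℝ))]
    have e4 : Real.exp (-((n:ℝ) * (d + 3))) ≤ Real.exp (-(n : ℝ)) := Real.exp_le_exp.2 (by linarith)
    have e5 : Real.exp (-(n : ℝ)) ≤ 1 / ((n : ℝ) + 1) := by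
      rw [Real.exp_neg, one_div, inv_le_inv₀ (Real.exp_pos _) (by positivity)]
      exact Real.add_one_le_exp _
    have e6 : (0:ℝ) < 1 / ((n:ℝ)+1) := by positivity
    calc Real.exp (-(A-1)) * Real.exp (-((n:ℝ)*(d+3)))
        ≤ (m/2) * (1/((n:ℝ)+1)) :=
          mul_le_mul hAexp (e4.trans e5) (Real.exp_pos _).le (by positivity)
      _ = m / 2 * (1 / ((n:ℝ) + 1)) := rfl
  have hMex : ∀ n : ℕ, ∃ C : ℝ, 0 ≤ C ∧ ∀ y ∈ Set.Icc (a - 1) (a + d + 1), |(p n).eval y| ≤ C := by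
    intro n
    obtain ⟨C, hC⟩ := (isCompact_Icc (a := a - 1) (b := a + d + 1)).exists_bound_of_continuousOn
      ((p n).continuous.continuousOn)
    exact ⟨max C 0, le_max_right _ _, fun y hy => le_trans (by simpa using hC y hy) (le_max_left _ _)⟩
  choose M hM0 hMb using hMex
  set δ : ℕ → ℝ := fun n => η n / (M n + 1) with hδ
  have hδpos : ∀ n, 0 < δ n := by
    intro n; rw [hδ]; have := hηpos n; have := hM0 n; positivity
  set χ : ℕ → ℝ → ℝ := fun n t =>
    Real.smoothTransition (t - (w n - 1)) * Real.smoothTransition ((w n + d + 1) - t) with hχ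
  set φ : ℕ → ℝ → ℝ := fun n t =>
    χ n t * (1 + δ n * (p n).eval (t - w n + a) - st19_sig0 t) with hφ
  set R : ℝ → ℕ := fun y => ⌊(y - (A - 1)) / (d + 3)⌋₊ with hR
  set bump : ℝ → ℝ := fun y => φ (R y) y with hbump
  set σ : ℝ → ℝ := fun x => st19_sig0 x + bump x with hσ
  have hφzl : ∀ (n : ℕ) (t : ℝ), t ≤ w n - 1 → φ n t = 0 := by
    intro n t ht
    rw [hφ]; simp only
    rw [hχ]; simp only
    rw [Real.smoothTransition.zero_of_nonpos (by linarith)]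
    ring
  have hφzr : ∀ (n : ℕ) (t : ℝ), w n + d + 1 ≤ t → φ n t = 0 := by
    intro n t ht
    rw [hφ]; simp only
    rw [hχ]; simp only
    rw [Real.smoothTransition.zero_of_nonpos (show w n + d + 1 - t ≤ 0 by linarith)]
    ring
  have hφsupp : ∀ (n : ℕ) (t : ℝ), φ n t ≠ 0 → w n - 1 < t ∧ t < w n + d + 1 := by
    intro n t h
    constructor
    · by_contra hc; push_neg at hc; exact h (hφzl n t hc)
    · by_contra hc; push_neg at hc; exact h (hφzr n t hc)
  -- master local identity
  have hL : ∀ (n : ℕ) (y : ℝ), w n - 2 < y → y < w n + d + 2 → bump y = φ n y := by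
    intro n y h1 h2
    have hwn : w n = A + (n : ℝ) * (d + 3) := rfl
    have hry : (y - (A - 1)) / (d + 3) < (n : ℝ) + 1 := by
      rw [div_lt_iff₀ hd3]; nlinarith
    have hk1 : R y < n + 1 := by
      have hh : (y - (A - 1)) / (d + 3) < ((n + 1 : ℕ) : ℝ) := by push_cast; exact hry
      rw [hR]
      exact (Nat.floor_lt' (Nat.succ_ne_zero n)).mpr hh
    have hk2 : (n : ℝ) - 1 < (R y : ℝ) + 1 := by
      have hlow : (n : ℝ) - 1 < (y - (A - 1)) / (d + 3) := by
        rw [lt_div_iff₀ hd3]; nlinarith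
      have := Nat.lt_floor_add_one ((y - (A - 1)) / (d + 3))
      rw [hR]; push_cast
      exact lt_trans hlow this
    by_cases hkn : R y = n
    · rw [hbump]; simp only; rw [hkn]
    · have hkle : R y ≤ n := Nat.lt_succ_iff.mp hk1
      have hn1 : (n : ℝ) < (R y : ℝ) + 2 := by linarith
      have hnk : n < R y + 2 := by exact_mod_cast hn1
      have hk3 : R y + 1 = n := by omega
      have hn0 : n ≠ 0 := by omega
      have hrn : (y - (A - 1)) / (d + 3) < (n : ℝ) := by
        have hRy_lt : R y < n := by omega
        have h' : ⌊(y - (A - 1)) / (d + 3)⌋₊ < n := by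
          rw [hR] at hRy_lt; exact hRy_lt
        exact (Nat.floor_lt' hn0).mp h'
      have hyn : y < w n - 1 := by
        rw [div_lt_iff₀ hd3] at hrn
        rw [hwn]; nlinarith
      have h4 : φ n y = 0 := hφzl n y (by linarith)
      have h5 : φ (R y) y = 0 := by
        refine hφzr (R y) y ?_
        have hcast : (R y : ℝ) = (n : ℝ) - 1 := by
          have : ((R y + 1 : ℕ) : ℝ) = (n : ℝ) := by exact_mod_cast congrArg (Nat.cast (R := ℝ)) hk3
          push_cast at this; linarith
        have hwk : w (R y) = A + ((n:ℝ) - 1) * (d + 3) := by rw [hw]; simp only; rw [hcast]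
        rw [hwk]; nlinarith
      rw [hbump]; simp only; rw [h4, h5]
  have hL0 : ∀ y : ℝ, y < A - 1 → bump y = 0 := by
    intro y hy
    rw [hbump]; simp only
    refine hφzl (R y) y ?_
    have : A ≤ w (R y) := by
      rw [hw]; simp only
      nlinarith [(Nat.cast_nonneg (R y) : (0:ℝ) ≤ ((R y : ℕ):ℝ)), hd3.le]
    linarith
  have hcov : ∀ x : ℝ, A - 1 ≤ x → w (R x) - 2 < x ∧ x < w (R x) + d + 2 := by
    intro x hx
    have hr0 : 0 ≤ (x - (A - 1)) / (d + 3) := div_nonneg (by linarith) hd3.le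
    have h1 : ((R x : ℕ) : ℝ) ≤ (x - (A - 1)) / (d + 3) := by rw [hR]; exact Nat.floor_le hr0
    have h2 : (x - (A - 1)) / (d + 3) < (R x : ℝ) + 1 := by
      rw [hR]; exact Nat.lt_floor_add_one _
    rw [le_div_iff₀ hd3] at h1
    rw [div_lt_iff₀ hd3] at h2
    constructor
    · rw [hw]; simp only; nlinarith
    · rw [hw]; simp only; nlinarith
  have hχb : ∀ (n : ℕ) (t : ℝ), |χ n t| ≤ 1 := by
    intro n t
    rw [hχ]; simp only
    rw [abs_of_nonneg (mul_nonneg (Real.smoothTransition.nonneg _) (Real.smoothTransition.nonneg _))]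
    exact mul_le_one₀ (Real.smoothTransition.le_one _) (Real.smoothTransition.nonneg _)
      (Real.smoothTransition.le_one _)
  have hφb : ∀ (n : ℕ) (y : ℝ), |φ n y| ≤ m / ((n : ℝ) + 1) := by
    intro n y
    by_cases h0 : φ n y = 0
    · rw [h0, abs_zero]; positivity
    · obtain ⟨h1, h2⟩ := hφsupp n y h0
      have c1 : 1 - st19_sig0 y ≤ η n := by
        have d1 := st19_one_sub_sig0_le y
        have d2 : Real.exp (-y) ≤ Real.exp (-(w n - 1)) := Real.exp_le_exp.2 (by linarith)
        linarith [hwbound n]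
      have c1' : 0 ≤ 1 - st19_sig0 y := by linarith [st19_sig0_le_one y]
      have cM : |(p n).eval (y - w n + a)| ≤ M n :=
        hMb n _ ⟨by linarith, by linarith⟩
      have c2 : |δ n * (p n).eval (y - w n + a)| ≤ η n := by
        rw [abs_mul, abs_of_pos (hδpos n)]
        calc δ n * |(p n).eval (y - w n + a)| ≤ δ n * M n :=
              mul_le_mul_of_nonneg_left cM (hδpos n).le
          _ ≤ δ n * (M n + 1) := by nlinarith [hδpos n]
          _ = η n := by
              rw [hδ]
              exact div_mul_cancel₀ _ (by linarith [hM0 n] : (0:ℝ) < M n + 1).ne'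
      have b1 : |1 + δ n * (p n).eval (y - w n + a) - st19_sig0 y| ≤ η n + η n := by
        have e : 1 + δ n * (p n).eval (y - w n + a) - st19_sig0 y
            = (1 - st19_sig0 y) + δ n * (p n).eval (y - w n + a) := by ring
        rw [e]
        calc |(1 - st19_sig0 y) + δ n * (p n).eval (y - w n + a)|
            ≤ |1 - st19_sig0 y| + |δ n * (p n).eval (y - w n + a)| := abs_add_le _ _
          _ ≤ η n + η n := by rw [abs_of_nonneg c1']; exact add_le_add c1 c2
      calc |φ n y| = |χ n y| * |1 + δ n * (p n).eval (y - w n + a) - st19_sig0 y| := by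
            rw [hφ]; simp only; rw [abs_mul]
        _ ≤ 1 * (η n + η n) :=
            mul_le_mul (hχb n y) b1 (abs_nonneg _) zero_le_one
        _ = m / ((n : ℝ) + 1) := by rw [hη]; simp only; ring
  have hbumpm : ∀ y : ℝ, |bump y| ≤ m := by
    intro y
    refine (hφb (R y) y).trans ?_
    rw [div_le_iff₀ (by positivity : (0:ℝ) < (R y : ℝ) + 1)]
    nlinarith [(Nat.cast_nonneg (R y) : (0:ℝ) ≤ ((R y : ℕ):ℝ)), hm0.le]
  have hbumpN : ∀ (N : ℕ) (y : ℝ), w N - 1 ≤ y → |bump y| ≤ m / ((N : ℝ) + 1) := by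
    intro N y hy
    by_cases h0 : φ (R y) y = 0
    · rw [hbump]; simp only; rw [h0, abs_zero]; positivity
    · obtain ⟨h1, h2⟩ := hφsupp (R y) y h0
      have hRN : N ≤ R y := by
        by_contra hc
        push_neg at hc
        have hcast : (R y : ℝ) + 1 ≤ (N : ℝ) := by exact_mod_cast Nat.succ_le_of_lt hc
        have : w (R y) + d + 1 ≤ w N - 2 := by
          rw [hw]; simp only; nlinarith
        linarith
      calc |bump y| = |φ (R y) y| := by rw [hbump]
        _ ≤ m / ((R y : ℝ) + 1) := hφb _ _
        _ ≤ m / ((N : ℝ) + 1) := by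
            apply div_le_div_of_nonneg_left hm0.le (by positivity)
            exact_mod_cast Nat.succ_le_succ hRN
  have hsmooth : ∀ n : ℕ, ContDiff ℝ (⊤:ℕ∞) (fun t => st19_sig0 t + φ n t) := by
    intro n
    refine st19_sig0_contDiff.add ?_
    rw [hφ]; simp only
    refine ContDiff.mul ?_ ?_
    · rw [hχ]; simp only
      exact ((Real.smoothTransition.contDiff (n := ⊤)).comp
        (contDiff_id.sub contDiff_const)).mul
        ((Real.smoothTransition.contDiff (n := ⊤)).comp (contDiff_const.sub contDiff_id))
    · refine (contDiff_const.add ?_).sub st19_sig0_contDiff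
      exact contDiff_const.mul ((st19_poly_contDiff (p n)).comp
        ((contDiff_id.sub contDiff_const).add contDiff_const))
  refine ⟨σ, ?_, ?_, ?_, ?_, ?_, ?_⟩
  · -- ContDiff
    rw [contDiff_iff_contDiffAt]
    intro x
    by_cases hx : x < A - 1
    · have heq : σ =ᶠ[nhds x] st19_sig0 := by
        filter_upwards [Iio_mem_nhds hx] with y hy
        rw [hσ]; simp only; rw [hL0 y hy, add_zero]
      exact st19_sig0_contDiff.contDiffAt.congr_of_eventuallyEq heq
    · push_neg at hx
      obtain ⟨h1, h2⟩ := hcov x hx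
      have heq : σ =ᶠ[nhds x] (fun t => st19_sig0 t + φ (R x) t) := by
        filter_upwards [Ioo_mem_nhds h1 h2] with y hy
        rw [hσ]; simp only; rw [hL (R x) y hy.1 hy.2]
      exact (hsmooth (R x)).contDiffAt.congr_of_eventuallyEq heq
  · -- atBot
    have heq : st19_sig0 =ᶠ[atBot] σ := by
      filter_upwards [eventually_lt_atBot (A - 1)] with y hy
      rw [hσ]; simp only; rw [hL0 y hy, add_zero]
    exact Filter.Tendsto.congr' heq st19_sig0_tendsto_atBot
  · -- atTop
    have hb0 : Tendsto bump atTop (nhds 0) := by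
      rw [Metric.tendsto_nhds]
      intro ε hε
      obtain ⟨N, hN⟩ := exists_nat_one_div_lt (show (0:ℝ) < ε / m by positivity)
      rw [eventually_atTop]
      refine ⟨w N - 1, fun y hy => ?_⟩
      rw [Real.dist_eq, sub_zero]
      calc |bump y| ≤ m / ((N : ℝ) + 1) := hbumpN N y hy
        _ = m * (1 / ((N:ℝ) + 1)) := by ring
        _ < m * (ε / m) := by
            exact mul_lt_mul_of_pos_left hN hm0
        _ = ε := by field_simp
    have := st19_sig0_tendsto_atTop.add hb0
    simpa [hσ] using this
  · -- strict mono on Iio d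
    intro x hx y hy hxy
    have hx' : bump x = 0 := hL0 x (by have : x < d := hx; linarith)
    have hy' : bump y = 0 := hL0 y (by have : y < d := hy; linarith)
    rw [hσ]; simp only; rw [hx', hy', add_zero, add_zero]
    exact st19_sig0_strictMono hxy
  · -- lambda-increasing
    refine ⟨st19_sig0, fun x _ y _ hxy => st19_sig0_strictMono hxy, fun x _ => ?_⟩
    have he : σ x - st19_sig0 x = bump x := by rw [hσ]; simp only; ring
    rw [he]
    exact (hbumpm x).trans hmlam
  · -- approximation
    intro f hf ε hε
    obtain ⟨n, hn⟩ := hpd f hf ε hε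
    refine ⟨(δ n)⁻¹, -(δ n)⁻¹, a - w n, a - w 0, ?_⟩
    intro x hx
    obtain ⟨hax, hxd⟩ := hQab x hx
    have key : ∀ k : ℕ, σ (x - (a - w k)) = 1 + δ k * (p k).eval x := by
      intro k
      set t := x - (a - w k) with ht
      have ht1 : w k ≤ t := by rw [ht]; linarith
      have ht2 : t ≤ w k + d := by rw [ht]; linarith
      have hb : bump t = φ k t := hL k t (by linarith) (by linarith)
      have hχ1 : χ k t = 1 := by
        rw [hχ]; simp only
        rw [Real.smoothTransition.one_of_one_le (by linarith),
          Real.smoothTransition.one_of_one_le (by linarith), mul_one]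
      have harg : t - w k + a = x := by rw [ht]; ring
      rw [hσ]; simp only
      rw [hb, hφ]; simp only
      rw [hχ1, one_mul, harg]; ring
    rw [key n, key 0, hp0]
    have hrw : f x - (δ n)⁻¹ * (1 + δ n * (p n).eval x) - -(δ n)⁻¹ * (1 + δ 0 * Polynomial.eval x 0)
        = f x - (p n).eval x := by
      have hδn := (hδpos n).ne'
      simp only [Polynomial.eval_zero, mul_zero, add_zero]
      field_simp
      ring
    rw [hrw]
    exact hn x hx
end
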